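/- arXiv:1707.08292 — 6 statements merged into one kernel-verified Lean document; each statement's English description precedes it below -/
import Mathlib

section
/- Let A be a hereditary abelian category, X an object of A, and K_{X,m} the bounded acyclic complex with X in degrees m-1 and m connected by the identity map. Then for any bounded complex M over A and any p ≥ 2, Ext^p(K_{X,m}, M) = 0 in the category of bounded complexes C^b(A). -/
open CategoryTheory CategoryTheory.Limits ZeroObject

universe w w' v u

variable {A : Type u} [Category.{v} A] [Abelian A]

/-- The acyclic complex `K_{X,m}`: `X` in degrees `m-1` and `m`, identity differential. -/
noncomputable def Kc (X : A) (m : ℤ) : CochainComplex A ℤ where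
  X i := if i = m - 1 ∨ i = m then X else 0
  d i j := if h : i = m - 1 ∧ j = m then
      eqToHom (by rw [if_pos (Or.inl h.1), if_pos (Or.inr h.2)]) else 0
  shape i j hij := by
    rw [dif_neg]
    rintro ⟨rfl, rfl⟩
    exact hij (by simp [ComplexShape.up_Rel])
  d_comp_d' i j k _ _ := by
    by_cases h1 : i = m - 1 ∧ j = m
    · obtain ⟨hi, hj⟩ := h1
      rw [dif_pos ⟨hi, hj⟩, dif_neg (fun h2 => by obtain ⟨h2a, h2b⟩ := h2; omega)]
      exact comp_zero
    · rw [dif_neg h1, zero_comp]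

/-- The stalk complex `U_{X,n}` with `X` concentrated in degree `n`. -/
noncomputable def Uc (X : A) (n : ℤ) : CochainComplex A ℤ :=
  (HomologicalComplex.single A (ComplexShape.up ℤ) n).obj X

/-- A complex is bounded. -/
def Bdd (M : CochainComplex A ℤ) : Prop :=
  ∃ a b : ℤ, ∀ i : ℤ, i < a ∨ b < i → IsZero (M.X i)

section Aux

open HomologicalComplex

variable (m : ℤ)

lemma KcX_eq (X : A) {i : ℤ} (h : i = m - 1 ∨ i = m) : (Kc X m).X i = X := if_pos h

lemma KcX_isZero (X : A) {i : ℤ} (h : ¬ (i = m - 1 ∨ i = m)) : IsZero ((Kc X m).X i) := by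
  dsimp [Kc]
  rw [if_neg h]
  exact isZero_zero A

lemma Kc_d_eq (X : A) : (Kc X m).d (m - 1) m =
    eqToHom (KcX_eq m X (Or.inl rfl)) ≫ eqToHom (KcX_eq m X (Or.inr rfl)).symm := by
  dsimp [Kc]
  rw [dif_pos ⟨rfl, rfl⟩]
  exact (eqToHom_trans _ _).symm

lemma Kc_d_ne (X : A) {i j : ℤ} (h : ¬ (i = m - 1 ∧ j = m)) : (Kc X m).d i j = 0 := by
  dsimp [Kc]
  rw [dif_neg h]
  exact rfl

/-- The functorial version of `Kc`. -/
@[reducible] noncomputable def Kf : A ⥤ CochainComplex A ℤ where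
  obj X := Kc X m
  map {X Y} f :=
    { f := fun i => if h : i = m - 1 ∨ i = m then
        eqToHom (KcX_eq m X h) ≫ f ≫ eqToHom (KcX_eq m Y h).symm else 0
      comm' := by
        intro i j hij
        by_cases h : i = m - 1 ∧ j = m
        · obtain ⟨rfl, rfl⟩ := h
          rw [dif_pos (Or.inl rfl), dif_pos (Or.inr rfl), Kc_d_eq, Kc_d_eq]
          simp
        · rw [Kc_d_ne m X h, Kc_d_ne m Y h, comp_zero, zero_comp] }
  map_id X := by
    ext i
    by_cases h : i = m - 1 ∨ i = m
    · dsimp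
      rw [dif_pos h]
      simp
    · exact (KcX_isZero m X h).eq_of_src _ _
  map_comp {X Y Z} f g := by
    ext i
    by_cases h : i = m - 1 ∨ i = m
    · dsimp
      rw [dif_pos h, dif_pos h, dif_pos h]
      simp
    · exact (KcX_isZero m X h).eq_of_src _ _


@[simp] lemma Kf_obj (X : A) : (Kf m).obj X = Kc X m := rfl

instance Kf_additive : (Kf (A := A) m).Additive where
  map_add {X Y f g} := by
    ext i
    by_cases h : i = m - 1 ∨ i = m
    · dsimp [Kf]
      rw [dif_pos h, dif_pos h, dif_pos h]
      simp [Preadditive.add_comp, Preadditive.comp_add]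
    · exact (KcX_isZero m X h).eq_of_src _ _

/-- The chain map `Kc X m ⟶ M` determined by a morphism `X ⟶ M.X (m-1)`. -/
noncomputable def KfUp (X : A) (M : CochainComplex A ℤ) (u : X ⟶ M.X (m - 1)) :
    (Kf m).obj X ⟶ M where
  f i :=
    if h1 : i = m - 1 then
      eqToHom (KcX_eq m X (Or.inl h1)) ≫ u ≫ eqToHom (by rw [h1])
    else if h2 : i = m then
      eqToHom (KcX_eq m X (Or.inr h2)) ≫ u ≫ M.d (m - 1) m ≫ eqToHom (by rw [h2])
    else 0
  comm' := by
    intro i j hij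
    simp only [ComplexShape.up_Rel] at hij
    dsimp only
    by_cases h1 : i = m - 1
    · obtain rfl : m - 1 = i := h1.symm
      obtain rfl : m = j := by omega
      rw [dif_pos rfl, dif_neg (by omega), dif_pos rfl, Kc_d_eq]
      simp
    · by_cases h2 : i = m
      · obtain rfl : m = i := h2.symm
        rw [dif_neg h1, dif_pos rfl, dif_neg (show ¬ j = m - 1 by omega),
          dif_neg (show ¬ j = m by omega),
          Kc_d_ne m X (i := m) (j := j) (fun h => h1 h.1)]
        simp
      · rw [dif_neg h1, dif_neg h2, Kc_d_ne m X (i := i) (j := j) (fun h => h1 h.1),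
          zero_comp, zero_comp]

lemma KfUp_f (X : A) (M : CochainComplex A ℤ) (u : X ⟶ M.X (m - 1)) (i : ℤ) :
    (KfUp m X M u).f i =
    (if h1 : i = m - 1 then
      eqToHom (KcX_eq m X (Or.inl h1)) ≫ u ≫ eqToHom (by rw [h1])
    else if h2 : i = m then
      eqToHom (KcX_eq m X (Or.inr h2)) ≫ u ≫ M.d (m - 1) m ≫ eqToHom (by rw [h2])
    else 0) := rfl

lemma Kf_map_f {X Y : A} (f : X ⟶ Y) (i : ℤ) :
    ((Kf m).map f).f i =
    (if h : i = m - 1 ∨ i = m then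
        eqToHom (KcX_eq m X h) ≫ f ≫ eqToHom (KcX_eq m Y h).symm else 0) := rfl

/-- The adjunction `Kf m ⊣ eval (m-1)` at the level of hom sets. -/
noncomputable def KfHomEquiv (X : A) (M : CochainComplex A ℤ) :
    ((Kf m).obj X ⟶ M) ≃ (X ⟶ M.X (m - 1)) where
  toFun g := eqToHom (KcX_eq m X (Or.inl rfl)).symm ≫ g.f (m - 1)
  invFun u := KfUp m X M u
  left_inv g := by
    ext i
    rw [KfUp_f]
    by_cases h1 : i = m - 1
    · obtain rfl : m - 1 = i := h1.symm
      rw [dif_pos rfl]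
      simp
    · by_cases h2 : i = m
      · obtain rfl : m = i := h2.symm
        rw [dif_neg h1, dif_pos rfl]
        have hc := g.comm (m - 1) m
        simp only [Kf_obj] at hc
        rw [Kc_d_eq] at hc
        simp only [eqToHom_refl, Category.comp_id, Category.assoc, hc]
        simp
      · rw [dif_neg h1, dif_neg h2]
        exact ((KcX_isZero m X (by tauto)).eq_of_src _ _).symm
  right_inv u := by
    dsimp only
    rw [KfUp_f, dif_pos rfl]
    simp

lemma KfHomEquiv_apply (X : A) (M : CochainComplex A ℤ) (g : (Kf m).obj X ⟶ M) :
    KfHomEquiv m X M g = eqToHom (KcX_eq m X (Or.inl rfl)).symm ≫ g.f (m - 1) := rfl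

lemma KfHomEquiv_symm_apply (X : A) (M : CochainComplex A ℤ) (u : X ⟶ M.X (m - 1)) :
    (KfHomEquiv m X M).symm u = KfUp m X M u := rfl

lemma KfUp_natural_left {X' X : A} (M : CochainComplex A ℤ) (f : X' ⟶ X)
    (u : X ⟶ M.X (m - 1)) :
    KfUp m X' M (f ≫ u) = (Kf m).map f ≫ KfUp m X M u := by
  ext i
  rw [HomologicalComplex.comp_f, KfUp_f, KfUp_f, Kf_map_f]
  by_cases h1 : i = m - 1
  · obtain rfl : m - 1 = i := h1.symm
    rw [dif_pos rfl, dif_pos rfl, dif_pos (Or.inl rfl)]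
    simp
  · by_cases h2 : i = m
    · obtain rfl : m = i := h2.symm
      rw [dif_neg h1, dif_pos rfl, dif_neg h1, dif_pos rfl, dif_pos (Or.inr rfl)]
      simp
    · rw [dif_neg h1, dif_neg h2, dif_neg h1, dif_neg h2, dif_neg (by tauto), zero_comp]

lemma KfUp_natural_right (X : A) {M M' : CochainComplex A ℤ} (u : X ⟶ M.X (m - 1))
    (h : M ⟶ M') :
    KfUp m X M' (u ≫ h.f (m - 1)) = KfUp m X M u ≫ h := by
  ext i
  rw [HomologicalComplex.comp_f, KfUp_f, KfUp_f]
  by_cases h1 : i = m - 1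
  · obtain rfl : m - 1 = i := h1.symm
    rw [dif_pos rfl, dif_pos rfl]
    simp
  · by_cases h2 : i = m
    · obtain rfl : m = i := h2.symm
      rw [dif_neg h1, dif_pos rfl, dif_neg h1, dif_pos rfl]
      have := h.comm (m - 1) m
      simp only [Category.assoc, reassoc_of% this]
      simp
    · rw [dif_neg h1, dif_neg h2, dif_neg h1, dif_neg h2, zero_comp]

/-- The adjunction `Kf m ⊣ eval (m-1)`. -/
noncomputable def adj1 : Kf (A := A) m ⊣ HomologicalComplex.eval A (ComplexShape.up ℤ) (m - 1) :=
  Adjunction.mkOfHomEquiv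
    { homEquiv := fun X M => KfHomEquiv m X M
      homEquiv_naturality_left_symm := fun f u => KfUp_natural_left m _ f u
      homEquiv_naturality_right := fun g h => by
        show eqToHom _ ≫ (g ≫ h).f (m - 1) = (eqToHom _ ≫ g.f (m - 1)) ≫ h.f (m - 1)
        simp }

/-- The chain map `M ⟶ Kc X m` determined by a morphism `M.X m ⟶ X`. -/
noncomputable def KfDown (X : A) (M : CochainComplex A ℤ) (u : M.X m ⟶ X) :
    M ⟶ (Kf m).obj X where
  f i :=
    if h1 : i = m then
      eqToHom (by rw [h1]) ≫ u ≫ eqToHom (KcX_eq m X (Or.inr h1)).symm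
    else if h2 : i = m - 1 then
      eqToHom (by rw [h2]) ≫ M.d (m - 1) m ≫ u ≫ eqToHom (KcX_eq m X (Or.inl h2)).symm
    else 0
  comm' := by
    intro i j hij
    simp only [ComplexShape.up_Rel] at hij
    dsimp only
    by_cases h1 : i = m - 1
    · obtain rfl : m - 1 = i := h1.symm
      obtain rfl : m = j := by omega
      rw [dif_neg (by omega), dif_pos rfl, dif_pos rfl, Kc_d_eq]
      simp
    · by_cases h2 : i = m
      · obtain rfl : m = i := h2.symm
        rw [dif_neg (show ¬ j = m by omega), dif_neg (show ¬ j = m - 1 by omega),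
          Kc_d_ne m X (i := m) (j := j) (fun h => h1 h.1), comp_zero, comp_zero]
      · by_cases hj : j = m - 1
        · obtain rfl : m - 1 = j := hj.symm
          rw [dif_neg h1, dif_neg h2, dif_neg (by omega), dif_pos rfl, zero_comp]
          simp
        · rw [dif_neg h1, dif_neg h2, dif_neg (show ¬ j = m by omega), dif_neg hj,
            zero_comp, comp_zero]

lemma KfDown_f (X : A) (M : CochainComplex A ℤ) (u : M.X m ⟶ X) (i : ℤ) :
    (KfDown m X M u).f i =
    (if h1 : i = m then
      eqToHom (by rw [h1]) ≫ u ≫ eqToHom (KcX_eq m X (Or.inr h1)).symm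
    else if h2 : i = m - 1 then
      eqToHom (by rw [h2]) ≫ M.d (m - 1) m ≫ u ≫ eqToHom (KcX_eq m X (Or.inl h2)).symm
    else 0) := rfl

lemma KfDown_natural_right {X X' : A} (M : CochainComplex A ℤ) (u : M.X m ⟶ X)
    (w : X ⟶ X') :
    KfDown m X' M (u ≫ w) = KfDown m X M u ≫ (Kf m).map w := by
  ext i
  rw [HomologicalComplex.comp_f, KfDown_f, KfDown_f, Kf_map_f]
  by_cases h1 : i = m
  · obtain rfl : m = i := h1.symm
    rw [dif_pos rfl, dif_pos rfl, dif_pos (Or.inr rfl)]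
    simp
  · by_cases h2 : i = m - 1
    · obtain rfl : m - 1 = i := h2.symm
      rw [dif_neg h1, dif_pos rfl, dif_neg h1, dif_pos rfl, dif_pos (Or.inl rfl)]
      simp
    · rw [dif_neg h1, dif_neg h2, dif_neg h1, dif_neg h2, dif_neg (by tauto), zero_comp]

/-- The adjunction `eval m ⊣ Kf m`. -/
noncomputable def adj2 : HomologicalComplex.eval A (ComplexShape.up ℤ) m ⊣ Kf (A := A) m :=
  Adjunction.mkOfHomEquiv
    { homEquiv := fun M X =>
        { toFun := fun (u : M.X m ⟶ X) => KfDown m X M u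
          invFun := fun g => (g.f m ≫ eqToHom (KcX_eq m X (Or.inr rfl)) : M.X m ⟶ X)
          left_inv := fun (u : M.X m ⟶ X) => by
            dsimp only
            rw [KfDown_f, dif_pos rfl]
            simp
            exact rfl
          right_inv := fun g => by
            dsimp only
            ext i
            rw [KfDown_f]
            by_cases h1 : i = m
            · obtain rfl : m = i := h1.symm
              rw [dif_pos rfl]
              simp
            · by_cases h2 : i = m - 1
              · obtain rfl : m - 1 = i := h2.symm
                rw [dif_neg h1, dif_pos rfl]
                have hc := g.comm (m - 1) m
                simp only [Kf_obj] at hc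
                rw [Kc_d_eq] at hc
                simp only [eqToHom_refl, Category.id_comp, Category.assoc]
                rw [← reassoc_of% hc]
                simp
              · rw [dif_neg h1, dif_neg h2]
                exact ((KcX_isZero m X (by tauto)).eq_of_tgt _ _).symm }
      homEquiv_naturality_left_symm := fun f g => by
        show (f ≫ g).f m ≫ eqToHom _ = f.f m ≫ (g.f m ≫ eqToHom _)
        simp
      homEquiv_naturality_right := fun u w => by
        dsimp only
        exact KfDown_natural_right m _ u w }

noncomputable instance : PreservesFiniteColimits (Kf (A := A) m) :=
  letI : PreservesColimitsOfSize.{0, 0} (Kf (A := A) m) :=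
    (adj1 m).leftAdjoint_preservesColimits
  PreservesColimitsOfSize.preservesFiniteColimits _

noncomputable instance : PreservesFiniteLimits (Kf (A := A) m) :=
  letI : PreservesLimitsOfSize.{0, 0} (Kf (A := A) m) :=
    (adj2 m).rightAdjoint_preservesLimits
  PreservesLimitsOfSize.preservesFiniteLimits _

end Aux

section MapComplexAdj

/-- An adjunction between functors preserving zero morphisms induces an adjunction
between the induced functors on homological complexes. -/
noncomputable def mapHomologicalComplexAdjunction {C₁ : Type*} {C₂ : Type*}
    [Category C₁] [Category C₂] [Preadditive C₁] [Preadditive C₂]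
    {F : C₁ ⥤ C₂} {G : C₂ ⥤ C₁} (adj : F ⊣ G)
    [F.PreservesZeroMorphisms] [G.PreservesZeroMorphisms]
    {ι : Type*} (c : ComplexShape ι) :
    F.mapHomologicalComplex c ⊣ G.mapHomologicalComplex c :=
  Adjunction.mkOfHomEquiv
    { homEquiv := fun K L =>
        { toFun := fun f =>
            { f := fun i => adj.homEquiv _ _ (f.f i)
              comm' := fun i j _ => by
                show adj.homEquiv _ _ (f.f i) ≫ G.map (L.d i j) = K.d i j ≫ adj.homEquiv _ _ (f.f j)
                erw [← Adjunction.homEquiv_naturality_right,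
                  ← Adjunction.homEquiv_naturality_left]
                congr 1
                exact f.comm i j }
          invFun := fun g =>
            { f := fun i => (adj.homEquiv _ _).symm (g.f i)
              comm' := fun i j _ => by
                show (adj.homEquiv _ _).symm (g.f i) ≫ L.d i j =
                  F.map (K.d i j) ≫ (adj.homEquiv _ _).symm (g.f j)
                erw [← Adjunction.homEquiv_naturality_right_symm,
                  ← Adjunction.homEquiv_naturality_left_symm]
                congr 1
                exact g.comm i j }
          left_inv := fun f => by ext i; dsimp; exact (adj.homEquiv _ _).symm_apply_apply _
          right_inv := fun g => by ext i; dsimp; exact (adj.homEquiv _ _).apply_symm_apply _ }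
      homEquiv_naturality_left_symm := fun f g => by
        ext i
        dsimp
        exact adj.homEquiv_naturality_left_symm _ _
      homEquiv_naturality_right := fun f g => by
        ext i
        dsimp
        exact adj.homEquiv_naturality_right _ _ }

end MapComplexAdj

section Derived

universe wa wb

open HomologicalComplex

/-- The single functor to the derived category factors through `Q`. -/
noncomputable def singleCompQIso (B : Type u) [Category.{v} B] [Abelian B]
    [HasDerivedCategory.{wa} B] :
    DerivedCategory.singleFunctor B 0 ≅
      CochainComplex.singleFunctor B 0 ⋙ DerivedCategory.Q :=
  (SingleFunctors.evaluation _ _ 0).mapIso (DerivedCategory.singleFunctorsPostcompQIso B)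

/-- An exact functor commutes with single complexes in the derived category. -/
noncomputable def mapDCSingleIso {B₁ : Type u} {B₂ : Type w} [Category.{v} B₁]
    [Category.{w'} B₂] [Abelian B₁] [Abelian B₂] [HasDerivedCategory.{wa} B₁]
    [HasDerivedCategory.{wb} B₂]
    (F : B₁ ⥤ B₂) [F.Additive] [PreservesFiniteLimits F] [PreservesFiniteColimits F] (X : B₁) :
    F.mapDerivedCategory.obj ((DerivedCategory.singleFunctor B₁ 0).obj X) ≅
      (DerivedCategory.singleFunctor B₂ 0).obj (F.obj X) :=
  F.mapDerivedCategory.mapIso ((singleCompQIso B₁).app X) ≪≫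
    F.mapDerivedCategoryFactors.app ((CochainComplex.singleFunctor B₁ 0).obj X) ≪≫
    DerivedCategory.Q.mapIso
      ((HomologicalComplex.singleMapHomologicalComplex F (ComplexShape.up ℤ) 0).app X) ≪≫
    ((singleCompQIso B₂).app (F.obj X)).symm

variable (m : ℤ) [HasDerivedCategory.{wa} A]
  [HasDerivedCategory.{wb} (CochainComplex A ℤ)]

noncomputable instance : CatCommSq
    ((Kf (A := A) m).mapHomologicalComplex (ComplexShape.up ℤ))
    DerivedCategory.Q DerivedCategory.Q (Kf m).mapDerivedCategory :=
  ⟨((Kf m).mapDerivedCategoryFactors).symm⟩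

noncomputable instance : CatCommSq
    ((HomologicalComplex.eval A (ComplexShape.up ℤ) (m - 1)).mapHomologicalComplex
      (ComplexShape.up ℤ)) DerivedCategory.Q DerivedCategory.Q
    (HomologicalComplex.eval A (ComplexShape.up ℤ) (m - 1)).mapDerivedCategory :=
  ⟨((HomologicalComplex.eval A (ComplexShape.up ℤ) (m - 1)).mapDerivedCategoryFactors).symm⟩

/-- The derived adjunction between `Kf m` and `eval (m-1)`. -/
noncomputable def derivedAdj :
    (Kf (A := A) m).mapDerivedCategory ⊣
      (HomologicalComplex.eval A (ComplexShape.up ℤ) (m - 1)).mapDerivedCategory :=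
  (mapHomologicalComplexAdjunction (adj1 m) (ComplexShape.up ℤ)).localization
    DerivedCategory.Q (HomologicalComplex.quasiIso _ _)
    DerivedCategory.Q (HomologicalComplex.quasiIso _ _)
    ((Kf m).mapDerivedCategory)
    ((HomologicalComplex.eval A (ComplexShape.up ℤ) (m - 1)).mapDerivedCategory)

end Derived

theorem stmt0 [HasExt.{w} A] [HasExt.{w'} (CochainComplex A ℤ)]
    (hered : ∀ (X Y : A) (n : ℕ), 2 ≤ n → Subsingleton (Abelian.Ext X Y n))
    (X : A) (m : ℤ) (M : CochainComplex A ℤ) (hM : Bdd M) (p : ℕ) (hp : 2 ≤ p) :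
    Subsingleton (Abelian.Ext (Kc X m) M p) := by
  letI : HasDerivedCategory A := HasDerivedCategory.standard A
  letI : HasDerivedCategory (CochainComplex A ℤ) := HasDerivedCategory.standard _
  have h0 : Subsingleton (Abelian.Ext X (M.X (m - 1)) p) := hered _ _ p hp
  have h1 : Subsingleton ((DerivedCategory.singleFunctor A 0).obj X ⟶
      ((DerivedCategory.singleFunctor A 0).obj (M.X (m - 1)))⟦(p : ℤ)⟧) :=
    @Equiv.subsingleton _ _
      (Abelian.Ext.homEquiv (X := X) (Y := M.X (m - 1)) (n := p)).symm h0
  let isoT : (HomologicalComplex.eval A (ComplexShape.up ℤ) (m - 1)).mapDerivedCategory.obj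
      (((DerivedCategory.singleFunctor (CochainComplex A ℤ) 0).obj M)⟦(p : ℤ)⟧) ≅
      ((DerivedCategory.singleFunctor A 0).obj (M.X (m - 1)))⟦(p : ℤ)⟧ :=
    ((HomologicalComplex.eval A (ComplexShape.up ℤ) (m - 1)).mapDerivedCategory.commShiftIso
        (p : ℤ)).app ((DerivedCategory.singleFunctor (CochainComplex A ℤ) 0).obj M) ≪≫
      (shiftFunctor _ (p : ℤ)).mapIso
        (mapDCSingleIso (HomologicalComplex.eval A (ComplexShape.up ℤ) (m - 1)) M)
  have h2 : Subsingleton ((DerivedCategory.singleFunctor A 0).obj X ⟶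
      (HomologicalComplex.eval A (ComplexShape.up ℤ) (m - 1)).mapDerivedCategory.obj
        (((DerivedCategory.singleFunctor (CochainComplex A ℤ) 0).obj M)⟦(p : ℤ)⟧)) :=
    @Equiv.subsingleton _ _ isoT.homToEquiv h1
  have h3 : Subsingleton ((Kf m).mapDerivedCategory.obj
      ((DerivedCategory.singleFunctor A 0).obj X) ⟶
      ((DerivedCategory.singleFunctor (CochainComplex A ℤ) 0).obj M)⟦(p : ℤ)⟧) :=
    @Equiv.subsingleton _ _ ((derivedAdj m).homEquiv _ _) h2
  have h4 : Subsingleton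
      ((DerivedCategory.singleFunctor (CochainComplex A ℤ) 0).obj (Kc X m) ⟶
      ((DerivedCategory.singleFunctor (CochainComplex A ℤ) 0).obj M)⟦(p : ℤ)⟧) :=
    @Equiv.subsingleton _ _ (mapDCSingleIso (Kf m) X).homFromEquiv.symm h3
  exact @Equiv.subsingleton _ _
    (Abelian.Ext.homEquiv (X := Kc X m) (Y := M) (n := p)) h4
end

section
/- Let A be a hereditary abelian category, X an object, and K_{X,m} the acyclic two-term complex with identity differential in degrees m-1, m. Then for any bounded complex M over A and any p ≥ 2, Ext^p(M, K_{X,m}) = 0 in C^b(A). -/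
open CategoryTheory CategoryTheory.Limits ZeroObject

universe w w' v u

variable {A : Type u} [Category.{v} A] [Abelian A]

namespace KcAux

lemma Kc_X_eq (X : A) (m i : ℤ) (h : i = m - 1 ∨ i = m) : (Kc X m).X i = X := if_pos h

lemma Kc_X_isZero (X : A) (m i : ℤ) (h : ¬(i = m - 1 ∨ i = m)) : IsZero ((Kc X m).X i) := by
  dsimp [Kc]
  rw [if_neg h]
  exact isZero_zero A

lemma Kc_d_eq (X : A) (m i j : ℤ) (hi : i = m - 1) (hj : j = m) :
    (Kc X m).d i j = eqToHom (by rw [Kc_X_eq X m i (Or.inl hi), Kc_X_eq X m j (Or.inr hj)]) := by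
  dsimp [Kc]
  rw [dif_pos ⟨hi, hj⟩]

lemma Kc_d_eq_zero (X : A) (m i j : ℤ) (h : ¬(i = m - 1 ∧ j = m)) :
    (Kc X m).d i j = 0 := by
  dsimp [Kc]
  rw [dif_neg h]; rfl

variable (m : ℤ)

/-- The functor `X ↦ Kc X m`. -/
@[reducible] noncomputable def KcF : A ⥤ CochainComplex A ℤ where
  obj X := Kc X m
  map {X Y} f :=
    { f := fun i => if h : i = m - 1 ∨ i = m then
        eqToHom (Kc_X_eq X m i h) ≫ f ≫ eqToHom (Kc_X_eq Y m i h).symm else 0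
      comm' := fun i j _ => by
        by_cases hd : i = m - 1 ∧ j = m
        · obtain ⟨hi, hj⟩ := hd
          skip
          rw [Kc_d_eq X m i j hi hj, Kc_d_eq Y m i j hi hj,
            dif_pos (Or.inl hi), dif_pos (Or.inr hj)]
          simp
        · rw [Kc_d_eq_zero X m i j hd, Kc_d_eq_zero Y m i j hd, zero_comp, comp_zero] }
  map_id X := by
    ext i
    dsimp
    split_ifs with h
    · simp
    · exact ((Kc_X_isZero X m i h).eq_of_src _ _)
  map_comp f g := by
    ext i
    dsimp
    split_ifs with h
    · simp
    · simp

instance : (KcF (A := A) m).Additive where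
  map_add {X Y f g} := by
    ext i
    dsimp [KcF]
    split_ifs with h
    · simp [Preadditive.add_comp, Preadditive.comp_add]
    · simp

lemma KcF_obj (X : A) : (KcF (A := A) m).obj X = Kc X m := rfl

/-- Adjunction `eval m ⊣ KcF m`. -/
noncomputable def adj1 : HomologicalComplex.eval A (ComplexShape.up ℤ) m ⊣ KcF (A := A) m :=
  Adjunction.mkOfHomEquiv
  { homEquiv := fun M X =>
    { toFun := fun (g : M.X m ⟶ X) =>
        { f := fun i =>
            if h1 : i = m - 1 then M.d i m ≫ g ≫ eqToHom (Kc_X_eq X m i (Or.inl h1)).symm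
            else if h2 : i = m then
              (M.XIsoOfEq h2).hom ≫ g ≫ eqToHom (Kc_X_eq X m i (Or.inr h2)).symm
            else 0
          comm' := fun i j hij => by
            have hij' : i + 1 = j := hij
            dsimp only [KcF]
            by_cases h1 : i = m - 1
            · subst i
              have hj : m = j := by omega
              subst hj
              rw [dif_pos rfl, Kc_d_eq X m _ _ rfl rfl,
                dif_neg (show ¬ (m : ℤ) = m - 1 by omega), dif_pos rfl]
              simp [HomologicalComplex.XIsoOfEq]
            · by_cases h2 : i = m
              · subst i
                rw [dif_neg h1, dif_pos rfl,
                  dif_neg (show ¬ j = m - 1 by omega), dif_neg (show ¬ j = m by omega),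
                  Kc_d_eq_zero X m m j (fun hc => h1 hc.1), comp_zero, comp_zero]
              · rw [dif_neg h1, dif_neg h2, zero_comp]
                by_cases hj : j = m - 1
                · rw [dif_pos hj]
                  rw [← Category.assoc, ← Category.assoc, HomologicalComplex.d_comp_d,
                    zero_comp, zero_comp]
                · rw [dif_neg hj, dif_neg (show ¬ j = m by omega), comp_zero] }
      invFun := fun φ => (φ.f m ≫ eqToHom (Kc_X_eq X m m (Or.inr rfl)) : M.X m ⟶ X)
      left_inv := fun (g : M.X m ⟶ X) => by
        dsimp
        rw [dif_neg (show ¬ (m : ℤ) = m - 1 by omega), dif_pos rfl]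
        simp [HomologicalComplex.XIsoOfEq]; rfl
      right_inv := fun φ => by
        ext i
        dsimp
        by_cases h1 : i = m - 1
        · rw [dif_pos h1]
          have hc := φ.comm i m
          dsimp only [KcF] at hc
          rw [Kc_d_eq X m i m h1 rfl] at hc
          rw [← Category.assoc, ← Category.assoc, ← hc]
          simp
        · by_cases h2 : i = m
          · subst i
            rw [dif_neg h1, dif_pos rfl]
            simp [HomologicalComplex.XIsoOfEq]
          · rw [dif_neg h1, dif_neg h2]
            exact ((Kc_X_isZero X m i (by tauto)).eq_of_tgt _ _) }
    homEquiv_naturality_left_symm := fun f g => by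
      dsimp
      exact Category.assoc _ _ _
    homEquiv_naturality_right := fun {M X X'} f k => by
      ext i
      dsimp [KcF]
      erw [Equiv.coe_fn_mk, Equiv.coe_fn_mk]
      dsimp only
      by_cases h1 : i = m - 1
      · rw [dif_pos h1, dif_pos h1, dif_pos (Or.inl h1)]
        simp; erw [Category.assoc, Category.assoc, eqToHom_trans_assoc, eqToHom_refl, Category.id_comp]
      · by_cases h2 : i = m
        · rw [dif_neg h1, dif_neg h1, dif_pos h2, dif_pos h2, dif_pos (Or.inr h2)]
          simp; erw [Category.assoc, Category.assoc, eqToHom_trans_assoc, eqToHom_refl, Category.id_comp]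
        · rw [dif_neg h1, dif_neg h1, dif_neg h2, dif_neg h2, zero_comp] }

/-- Adjunction `KcF m ⊣ eval (m-1)`. -/
noncomputable def adj2 : KcF (A := A) m ⊣ HomologicalComplex.eval A (ComplexShape.up ℤ) (m - 1) :=
  Adjunction.mkOfHomEquiv
  { homEquiv := fun X M =>
    { toFun := fun φ => eqToHom (Kc_X_eq X m (m - 1) (Or.inl rfl)).symm ≫ φ.f (m - 1)
      invFun := fun (u : X ⟶ M.X (m - 1)) =>
        { f := fun i =>
            if h1 : i = m - 1 then
              eqToHom (Kc_X_eq X m i (Or.inl h1)) ≫ u ≫ (M.XIsoOfEq h1).inv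
            else if h2 : i = m then
              eqToHom (Kc_X_eq X m i (Or.inr h2)) ≫ u ≫ M.d (m - 1) i
            else 0
          comm' := fun i j hij => by
            have hij' : i + 1 = j := hij
            dsimp only [KcF]
            by_cases h1 : i = m - 1
            · subst i
              have hj : m = j := by omega
              subst hj
              rw [dif_pos rfl, Kc_d_eq X m _ _ rfl rfl,
                dif_neg (show ¬ (m : ℤ) = m - 1 by omega), dif_pos rfl]
              simp [HomologicalComplex.XIsoOfEq]
            · by_cases h2 : i = m
              · subst i
                rw [dif_neg h1, dif_pos rfl,
                  dif_neg (show ¬ j = m - 1 by omega), dif_neg (show ¬ j = m by omega),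
                  Kc_d_eq_zero X m m j (fun hc => h1 hc.1), zero_comp,
                  Category.assoc, Category.assoc, HomologicalComplex.d_comp_d,
                  comp_zero, comp_zero]
              · rw [dif_neg h1, dif_neg h2, zero_comp,
                  Kc_d_eq_zero X m i j (fun hc => h1 hc.1), zero_comp] }
      left_inv := fun φ => by
        ext i
        dsimp
        by_cases h1 : i = m - 1
        · subst i
          rw [dif_pos rfl]
          simp [HomologicalComplex.XIsoOfEq]; erw [Category.comp_id, eqToHom_trans_assoc, eqToHom_refl, Category.id_comp]
        · by_cases h2 : i = m
          · subst i
            rw [dif_neg h1, dif_pos rfl]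
            have hc := φ.comm (m - 1) m
            dsimp only [KcF] at hc
            rw [Kc_d_eq X m (m - 1) m rfl rfl] at hc
            erw [Category.assoc]
            erw [hc]
            simp
          · rw [dif_neg h1, dif_neg h2]
            exact ((Kc_X_isZero X m i (by tauto)).eq_of_src _ _)
      right_inv := fun (u : X ⟶ M.X (m - 1)) => by
        dsimp
        rw [dif_pos rfl]
        simp [HomologicalComplex.XIsoOfEq]; erw [eqToHom_trans_assoc, eqToHom_refl, Category.id_comp] }
    homEquiv_naturality_left_symm := fun {X' X M} f g => by
      ext i
      dsimp [KcF]
      erw [Equiv.coe_fn_symm_mk, Equiv.coe_fn_symm_mk]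
      dsimp only
      by_cases h1 : i = m - 1
      · rw [dif_pos h1, dif_pos h1, dif_pos (Or.inl h1)]
        simp; erw [Category.assoc]
      · by_cases h2 : i = m
        · rw [dif_neg h1, dif_neg h1, dif_pos h2, dif_pos h2, dif_pos (Or.inr h2)]
          simp; erw [Category.assoc]
        · rw [dif_neg h1, dif_neg h1, dif_neg h2, dif_neg h2, comp_zero]
    homEquiv_naturality_right := fun f k => by
      dsimp
      exact (Category.assoc _ _ _).symm }

end KcAux

namespace ExtAdjAux

variable {C : Type*} [Category C] [Abelian C] {D : Type*} [Category D] [Abelian D]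

noncomputable def adjMapHC {G : C ⥤ D} {F : D ⥤ C} (adj : G ⊣ F) [G.Additive] [F.Additive] :
    G.mapHomologicalComplex (ComplexShape.up ℤ) ⊣ F.mapHomologicalComplex (ComplexShape.up ℤ) :=
  Adjunction.mkOfHomEquiv
    { homEquiv := fun K L =>
        { toFun := fun f =>
            { f := fun i => adj.homEquiv _ _ (f.f i : G.obj (K.X i) ⟶ L.X i)
              comm' := fun i j _ => by
                erw [Functor.mapHomologicalComplex_obj_d]
                erw [← Adjunction.homEquiv_naturality_right, f.comm,
                  Functor.mapHomologicalComplex_obj_d, Adjunction.homEquiv_naturality_left]; rfl }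
          invFun := fun g =>
            { f := fun i => (adj.homEquiv _ _).symm (g.f i : K.X i ⟶ F.obj (L.X i))
              comm' := fun i j _ => by
                skip
                erw [← Adjunction.homEquiv_naturality_right_symm,
                  ← Functor.mapHomologicalComplex_obj_d F, g.comm,
                  Adjunction.homEquiv_naturality_left_symm,
                  ← Functor.mapHomologicalComplex_obj_d G]; rfl }
          left_inv := fun f => by ext i; exact (adj.homEquiv _ _).symm_apply_apply _
          right_inv := fun g => by ext i; exact (adj.homEquiv _ _).apply_symm_apply _ }
      homEquiv_naturality_left_symm := fun f g => by
        ext i; exact adj.homEquiv_naturality_left_symm _ _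
      homEquiv_naturality_right := fun f g => by
        ext i; exact adj.homEquiv_naturality_right _ _ }

open DerivedCategory in
lemma subsingleton_ext {G : C ⥤ D} {F : D ⥤ C} (adj : G ⊣ F) [G.Additive] [F.Additive]
    [PreservesFiniteLimits G] [PreservesFiniteColimits G]
    [PreservesFiniteLimits F] [PreservesFiniteColimits F]
    [HasExt.{w1} C] [HasExt.{w2} D]
    (M : C) (X : D) (n : ℕ) (h : Subsingleton (Abelian.Ext (G.obj M) X n)) :
    Subsingleton (Abelian.Ext M (F.obj X) n) := by
  letI : HasDerivedCategory C := HasDerivedCategory.standard C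
  letI : HasDerivedCategory D := HasDerivedCategory.standard D
  letI : CatCommSq (G.mapHomologicalComplex (ComplexShape.up ℤ)) Q Q G.mapDerivedCategory :=
    ⟨G.mapDerivedCategoryFactors.symm⟩
  letI : CatCommSq (F.mapHomologicalComplex (ComplexShape.up ℤ)) Q Q F.mapDerivedCategory :=
    ⟨F.mapDerivedCategoryFactors.symm⟩
  have adj' : G.mapDerivedCategory ⊣ F.mapDerivedCategory :=
    (adjMapHC adj).localization Q (HomologicalComplex.quasiIso C (ComplexShape.up ℤ))
      Q (HomologicalComplex.quasiIso D (ComplexShape.up ℤ)) _ _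
  let eC : DerivedCategory.singleFunctor C 0 ≅
      HomologicalComplex.single C (ComplexShape.up ℤ) 0 ⋙ Q :=
    (SingleFunctors.evaluation _ _ 0).mapIso (singleFunctorsPostcompQIso C)
  let eD : DerivedCategory.singleFunctor D 0 ≅
      HomologicalComplex.single D (ComplexShape.up ℤ) 0 ⋙ Q :=
    (SingleFunctors.evaluation _ _ 0).mapIso (singleFunctorsPostcompQIso D)
  let iso1 : (DerivedCategory.singleFunctor C 0).obj (F.obj X) ≅
      F.mapDerivedCategory.obj ((DerivedCategory.singleFunctor D 0).obj X) :=
    eC.app (F.obj X) ≪≫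
      Q.mapIso ((HomologicalComplex.singleMapHomologicalComplex F (ComplexShape.up ℤ) 0).app X).symm
      ≪≫ (F.mapDerivedCategoryFactors.app _).symm
      ≪≫ F.mapDerivedCategory.mapIso (eD.app X).symm
  let iso2 : G.mapDerivedCategory.obj ((DerivedCategory.singleFunctor C 0).obj M) ≅
      (DerivedCategory.singleFunctor D 0).obj (G.obj M) :=
    G.mapDerivedCategory.mapIso (eC.app M) ≪≫
      G.mapDerivedCategoryFactors.app _ ≪≫
      Q.mapIso ((HomologicalComplex.singleMapHomologicalComplex G (ComplexShape.up ℤ) 0).app M)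
      ≪≫ (eD.app (G.obj M)).symm
  have E : Abelian.Ext M (F.obj X) n ≃ Abelian.Ext (G.obj M) X n :=
    Abelian.Ext.homEquiv.trans
      ((Iso.homCongr (Iso.refl _)
        ((shiftFunctor _ (n : ℤ)).mapIso iso1 ≪≫
          ((F.mapDerivedCategory.commShiftIso (n : ℤ)).app _).symm)).trans
        (((adj'.homEquiv _ _).symm.trans
          (Iso.homCongr iso2 (Iso.refl _))).trans
          Abelian.Ext.homEquiv.symm))
  exact E.subsingleton

end ExtAdjAux

theorem stmt1 [HasExt.{w} A] [HasExt.{w'} (CochainComplex A ℤ)]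
    (hered : ∀ (X Y : A) (n : ℕ), 2 ≤ n → Subsingleton (Abelian.Ext X Y n))
    (X : A) (m : ℤ) (M : CochainComplex A ℤ) (hM : Bdd M) (p : ℕ) (hp : 2 ≤ p) :
    Subsingleton (Abelian.Ext M (Kc X m) p) := by
  haveI : PreservesLimitsOfSize.{0, 0} (KcAux.KcF (A := A) m) :=
    (KcAux.adj1 (A := A) m).rightAdjoint_preservesLimits
  haveI : PreservesColimitsOfSize.{0, 0} (KcAux.KcF (A := A) m) :=
    (KcAux.adj2 (A := A) m).leftAdjoint_preservesColimits
  exact ExtAdjAux.subsingleton_ext (KcAux.adj1 (A := A) m) M X p (hered (M.X m) X p hp)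
end

section
/- Let B be an abelian category and 0 → U → V → W → 0 a short exact sequence of bounded cochain complexes over B. Then the following are equivalent: (i) for every i, the induced sequence 0 → Im(d_U^i) → Im(d_V^i) → Im(d_W^i) → 0 is short exact; (ii) for every i, the induced sequence 0 → Ker(d_U^i) → Ker(d_V^i) → Ker(d_W^i) → 0 is short exact; (iii) for every i, the induced sequence 0 → H^i(U) → H^i(V) → H^i(W) → 0 is short exact. -/
open CategoryTheory CategoryTheory.Limits ZeroObject

universe w w' v u

variable {A : Type u} [Category.{v} A] [Abelian A]

/-- A complex is acyclic if it is exact everywhere. -/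
def Acyc (K : CochainComplex A ℤ) : Prop := ∀ i : ℤ, K.ExactAt i

section StmtAux

open CategoryTheory.ShortComplex

variable {C : Type*} [Category C] [Abelian C]

lemma aux_δ_zero_of_epi (D : SnakeInput C) (h : Epi D.L₀.g) : D.δ = 0 := by
  haveI := h
  rw [← cancel_epi D.L₀.g, D.L₀_g_δ, comp_zero]

lemma aux_δ_zero_of_mono (D : SnakeInput C) (h : Mono D.L₃.f) : D.δ = 0 := by
  haveI := h
  rw [← cancel_mono D.L₃.f, D.δ_L₃_f, zero_comp]

lemma aux_L₀_shortExact (D : SnakeInput C) (hm : Mono D.L₁.f) (h : D.δ = 0) :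
    D.L₀.ShortExact := by
  haveI := hm
  haveI : Epi D.L₀.g := D.L₁'_exact.epi_f h
  haveI : Mono D.L₀.f := D.mono_L₀_f
  exact ⟨D.L₀_exact⟩

lemma aux_L₃_shortExact (D : SnakeInput C) (he : Epi D.L₂.g) (h : D.δ = 0) :
    D.L₃.ShortExact := by
  haveI := he
  haveI : Mono D.L₃.f := D.L₂'_exact.mono_g h
  haveI : Epi D.L₃.g := D.epi_L₃_g
  exact ⟨D.L₃_exact⟩

/-- The row of kernels of a morphism of short complexes. -/
noncomputable def kerRow {S₁ S₂ : ShortComplex C} (φ : S₁ ⟶ S₂) : ShortComplex C :=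
  ShortComplex.mk (kernel.map φ.τ₁ φ.τ₂ S₁.f S₂.f φ.comm₁₂)
    (kernel.map φ.τ₂ φ.τ₃ S₁.g S₂.g φ.comm₂₃)
    (by ext; simp)

/-- The row of cokernels of a morphism of short complexes. -/
noncomputable def cokerRow {S₁ S₂ : ShortComplex C} (φ : S₁ ⟶ S₂) : ShortComplex C :=
  ShortComplex.mk (cokernel.map φ.τ₁ φ.τ₂ S₁.f S₂.f φ.comm₁₂)
    (cokernel.map φ.τ₂ φ.τ₃ S₁.g S₂.g φ.comm₂₃)
    (by ext; simp)

/-- The inclusion of the kernel row. -/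
noncomputable def kerRowι {S₁ S₂ : ShortComplex C} (φ : S₁ ⟶ S₂) : kerRow φ ⟶ S₁ where
  τ₁ := kernel.ι φ.τ₁
  τ₂ := kernel.ι φ.τ₂
  τ₃ := kernel.ι φ.τ₃
  comm₁₂ := by simp [kerRow]
  comm₂₃ := by simp [kerRow]

/-- The projection onto the cokernel row. -/
noncomputable def cokerRowπ {S₁ S₂ : ShortComplex C} (φ : S₁ ⟶ S₂) : S₂ ⟶ cokerRow φ where
  τ₁ := cokernel.π φ.τ₁
  τ₂ := cokernel.π φ.τ₂
  τ₃ := cokernel.π φ.τ₃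
  comm₁₂ := by simp [cokerRow]
  comm₂₃ := by simp [cokerRow]

/-- The snake input associated to a morphism between two short exact short complexes. -/
noncomputable def snakeOfHom {S₁ S₂ : ShortComplex C} (φ : S₁ ⟶ S₂)
    (h₁ : S₁.ShortExact) (h₂ : S₂.ShortExact) : SnakeInput C where
  L₀ := kerRow φ
  L₁ := S₁
  L₂ := S₂
  L₃ := cokerRow φ
  v₀₁ := kerRowι φ
  v₁₂ := φ
  v₂₃ := cokerRowπ φ
  w₀₂ := by ext <;> simp [kerRowι] <;> exact kernel.condition _
  w₁₃ := by ext <;> simp [cokerRowπ] <;> exact cokernel.condition _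
  h₀ := by
    refine isLimitOfIsLimitπ _ ?_ ?_ ?_ <;>
      exact (KernelFork.isLimitMapConeEquiv _ _).symm (kernelIsKernel _)
  h₃ := by
    refine isColimitOfIsColimitπ _ ?_ ?_ ?_ <;>
      exact (CokernelCofork.isColimitMapCoconeEquiv _ _).symm (cokernelIsCokernel _)
  L₁_exact := h₁.exact
  epi_L₁_g := h₁.epi_g
  L₂_exact := h₂.exact
  mono_L₂_f := h₂.mono_f

lemma aux_image_ι_comp_cokernel_π {X Y : C} (f : X ⟶ Y) :
    image.ι f ≫ cokernel.π f = 0 := by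
  rw [← cancel_epi (factorThruImage f), comp_zero, image.fac_assoc, cokernel.condition]

/-- In an abelian category, the image inclusion is a kernel of the cokernel projection. -/
noncomputable def aux_imageIsKernel {X Y : C} (f : X ⟶ Y) :
    IsLimit (KernelFork.ofι (image.ι f) (aux_image_ι_comp_cokernel_π f)) :=
  KernelFork.IsLimit.ofι _ _
    (fun k hk => kernel.lift (cokernel.π f) k hk ≫ (Abelian.imageIsoImage f).hom)
    (fun k hk => by
      rw [Category.assoc, Abelian.imageIsoImage_hom_comp_image_ι, kernel.lift_ι])
    (fun k hk m hm => by
      rw [← cancel_mono (image.ι f), hm, Category.assoc,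
        Abelian.imageIsoImage_hom_comp_image_ι, kernel.lift_ι])

/-- The cokernel projection is a cokernel of the image inclusion. -/
noncomputable def aux_cokernelπIsCokernelImageι {X Y : C} (f : X ⟶ Y) :
    IsColimit (CokernelCofork.ofπ (cokernel.π f) (aux_image_ι_comp_cokernel_π f)) :=
  CokernelCofork.IsColimit.ofπ _ _
    (fun k hk => cokernel.desc f k
      (by rw [← image.fac f, Category.assoc, hk, comp_zero]))
    (fun k hk => cokernel.π_desc _ _ _)
    (fun k hk m hm => by
      rw [← cancel_epi (cokernel.π f), hm, cokernel.π_desc])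

/-- The zero short complex. -/
noncomputable def zeroRow : ShortComplex C :=
  ShortComplex.mk (0 : (0 : C) ⟶ (0 : C)) (0 : (0 : C) ⟶ (0 : C)) (by simp)

end StmtAux

section StmtAux2

open HomologicalComplex CategoryTheory.ShortComplex

variable {A : Type u} [Category.{v} A] [Abelian A]

lemma aux_iCycles_toCycles (K : CochainComplex A ℤ) (j i : ℤ) :
    K.iCycles j ≫ K.toCycles j i = 0 := by
  rw [← cancel_mono (K.iCycles i), Category.assoc, HomologicalComplex.toCycles_i, zero_comp, HomologicalComplex.iCycles_d]

/-- `cycles j` is the kernel of `toCycles j (j+1)`. -/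
noncomputable def aux_cyclesIsKernelToCycles (K : CochainComplex A ℤ) (j i : ℤ) (hij : j + 1 = i) :
    IsLimit (KernelFork.ofι (K.iCycles j) (aux_iCycles_toCycles K j i)) := by
  subst hij
  exact KernelFork.IsLimit.ofι _ _
    (fun k hk => K.liftCycles k (j + 1) (by simp)
      (by simpa using hk =≫ K.iCycles (j + 1)))
    (fun k hk => by simp)
    (fun k hk m hm => by
      rw [← cancel_mono (K.iCycles j), hm]
      simp)

/-- The cycles of a cochain complex as an honest kernel. -/
noncomputable def aux_cyclesIsoKer (K : CochainComplex A ℤ) (i : ℤ) :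
    K.cycles i ≅ kernel (K.d i (i + 1)) where
  hom := kernel.lift _ (K.iCycles i) (K.iCycles_d i (i + 1))
  inv := K.liftCycles (kernel.ι _) (i + 1) (by simp) (kernel.condition _)
  hom_inv_id := by rw [← cancel_mono (K.iCycles i)]; simp
  inv_hom_id := by rw [← cancel_mono (kernel.ι (K.d i (i + 1)))]; simp

variable (S : ShortComplex (CochainComplex A ℤ))

/-- The degreewise row. -/
noncomputable abbrev evalRow (i : ℤ) : ShortComplex A :=
  S.map (HomologicalComplex.eval A (ComplexShape.up ℤ) i)

/-- The morphism of rows induced by the differentials. -/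
@[simps]
noncomputable def dHom (i : ℤ) : evalRow S i ⟶ evalRow S (i + 1) where
  τ₁ := S.X₁.d i (i + 1)
  τ₂ := S.X₂.d i (i + 1)
  τ₃ := S.X₃.d i (i + 1)
  comm₁₂ := (S.f.comm i (i + 1)).symm
  comm₂₃ := (S.g.comm i (i + 1)).symm

/-- The row of cycles. -/
noncomputable def cyclesRow (i : ℤ) : ShortComplex A :=
  ShortComplex.mk (cyclesMap S.f i) (cyclesMap S.g i)
    (by rw [← HomologicalComplex.cyclesMap_comp, S.zero, HomologicalComplex.cyclesMap_zero])

/-- The row of homologies. -/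
noncomputable def homologyRow (i : ℤ) : ShortComplex A :=
  ShortComplex.mk (homologyMap S.f i) (homologyMap S.g i)
    (by rw [← HomologicalComplex.homologyMap_comp, S.zero, HomologicalComplex.homologyMap_zero])

/-- The image row appearing in the statement. -/
noncomputable def imRow (i : ℤ) : ShortComplex A :=
  ShortComplex.mk
    (image.map (f := Arrow.mk (S.X₁.d i (i + 1))) (g := Arrow.mk (S.X₂.d i (i + 1)))
      (Arrow.homMk (u := S.f.f i) (v := S.f.f (i + 1)) (S.f.comm i (i + 1))))
    (image.map (f := Arrow.mk (S.X₂.d i (i + 1))) (g := Arrow.mk (S.X₃.d i (i + 1)))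
      (Arrow.homMk (u := S.g.f i) (v := S.g.f (i + 1)) (S.g.comm i (i + 1)))) (by
      have hz : S.f.f (i + 1) ≫ S.g.f (i + 1) = 0 := by
        rw [← HomologicalComplex.comp_f, S.zero]; simp
      rw [← cancel_mono (image.ι (S.X₃.d i (i + 1))), zero_comp, Category.assoc]
      erw [image.map_ι]
      rw [← Category.assoc]
      erw [image.map_ι]
      simp [hz])

/-- The inclusion of the image row into the degreewise row in degree `i+1`. -/
noncomputable def imRowι (i : ℤ) : imRow S i ⟶ evalRow S (i + 1) where
  τ₁ := image.ι (S.X₁.d i (i + 1))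
  τ₂ := image.ι (S.X₂.d i (i + 1))
  τ₃ := image.ι (S.X₃.d i (i + 1))
  comm₁₂ := by
    show image.ι (S.X₁.d i (i + 1)) ≫ S.f.f (i + 1) =
      image.map (f := Arrow.mk (S.X₁.d i (i + 1))) (g := Arrow.mk (S.X₂.d i (i + 1)))
        (Arrow.homMk (u := S.f.f i) (v := S.f.f (i + 1)) (S.f.comm i (i + 1))) ≫
        image.ι (S.X₂.d i (i + 1))
    exact (image.map_ι (f := Arrow.mk (S.X₁.d i (i + 1))) (g := Arrow.mk (S.X₂.d i (i + 1)))
      (Arrow.homMk (u := S.f.f i) (v := S.f.f (i + 1)) (S.f.comm i (i + 1)))).symm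
  comm₂₃ := by
    show image.ι (S.X₂.d i (i + 1)) ≫ S.g.f (i + 1) =
      image.map (f := Arrow.mk (S.X₂.d i (i + 1))) (g := Arrow.mk (S.X₃.d i (i + 1)))
        (Arrow.homMk (u := S.g.f i) (v := S.g.f (i + 1)) (S.g.comm i (i + 1))) ≫
        image.ι (S.X₃.d i (i + 1))
    exact (image.map_ι (f := Arrow.mk (S.X₂.d i (i + 1))) (g := Arrow.mk (S.X₃.d i (i + 1)))
      (Arrow.homMk (u := S.g.f i) (v := S.g.f (i + 1)) (S.g.comm i (i + 1)))).symm

/-- The inclusion of the cycles row. -/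
noncomputable def cyclesRowι (i : ℤ) : cyclesRow S i ⟶ evalRow S i where
  τ₁ := S.X₁.iCycles i
  τ₂ := S.X₂.iCycles i
  τ₃ := S.X₃.iCycles i
  comm₁₂ := (HomologicalComplex.cyclesMap_i S.f i).symm
  comm₂₃ := (HomologicalComplex.cyclesMap_i S.g i).symm

/-- The morphism from the degreewise row to the cycles row, induced by `d`. -/
noncomputable def toCyclesHom (j i : ℤ) : evalRow S j ⟶ cyclesRow S i where
  τ₁ := S.X₁.toCycles j i
  τ₂ := S.X₂.toCycles j i
  τ₃ := S.X₃.toCycles j i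
  comm₁₂ := by
    refine (cancel_mono (S.X₂.iCycles i)).1 ?_
    dsimp [cyclesRow]
    show (S.X₁.toCycles j i ≫ cyclesMap S.f i) ≫ S.X₂.iCycles i = (S.f.f j ≫ S.X₂.toCycles j i) ≫ S.X₂.iCycles i
    rw [Category.assoc, Category.assoc, HomologicalComplex.cyclesMap_i,
      HomologicalComplex.toCycles_i_assoc, HomologicalComplex.toCycles_i, S.f.comm]
  comm₂₃ := by
    refine (cancel_mono (S.X₃.iCycles i)).1 ?_
    dsimp [cyclesRow]
    show (S.X₂.toCycles j i ≫ cyclesMap S.g i) ≫ S.X₃.iCycles i = (S.g.f j ≫ S.X₃.toCycles j i) ≫ S.X₃.iCycles i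
    rw [Category.assoc, Category.assoc, HomologicalComplex.cyclesMap_i,
      HomologicalComplex.toCycles_i_assoc, HomologicalComplex.toCycles_i, S.g.comm]

/-- The projection from the cycles row to the homology row. -/
noncomputable def homologyπHom (i : ℤ) : cyclesRow S i ⟶ homologyRow S i where
  τ₁ := S.X₁.homologyπ i
  τ₂ := S.X₂.homologyπ i
  τ₃ := S.X₃.homologyπ i
  comm₁₂ := HomologicalComplex.homologyπ_naturality S.f i
  comm₂₃ := HomologicalComplex.homologyπ_naturality S.g i

/-- The cycles row is isomorphic to the kernel row. -/
noncomputable def cyclesRowIsoKerRow (i : ℤ) : cyclesRow S i ≅ kerRow (dHom S i) :=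
  ShortComplex.isoMk (aux_cyclesIsoKer S.X₁ i) (aux_cyclesIsoKer S.X₂ i)
    (aux_cyclesIsoKer S.X₃ i)
    (by
      refine (cancel_mono (kernel.ι (S.X₂.d i (i + 1)))).1 ?_
      dsimp [cyclesRow, kerRow, aux_cyclesIsoKer]
      show (kernel.lift _ (S.X₁.iCycles i) (S.X₁.iCycles_d i (i + 1)) ≫ kernel.map (S.X₁.d i (i + 1)) (S.X₂.d i (i + 1)) (S.f.f i) (S.f.f (i + 1)) (S.f.comm i (i + 1)).symm) ≫ kernel.ι _ = (cyclesMap S.f i ≫ kernel.lift _ (S.X₂.iCycles i) (S.X₂.iCycles_d i (i + 1))) ≫ kernel.ι _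
      simp [HomologicalComplex.cyclesMap_i])
    (by
      refine (cancel_mono (kernel.ι (S.X₃.d i (i + 1)))).1 ?_
      dsimp [cyclesRow, kerRow, aux_cyclesIsoKer]
      show (kernel.lift _ (S.X₂.iCycles i) (S.X₂.iCycles_d i (i + 1)) ≫ kernel.map (S.X₂.d i (i + 1)) (S.X₃.d i (i + 1)) (S.g.f i) (S.g.f (i + 1)) (S.g.comm i (i + 1)).symm) ≫ kernel.ι _ = (cyclesMap S.g i ≫ kernel.lift _ (S.X₃.iCycles i) (S.X₃.iCycles_d i (i + 1))) ≫ kernel.ι _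
      simp [HomologicalComplex.cyclesMap_i])

variable {S} (hS : S.ShortExact)

/-- The snake input relating the kernel row in degree `i` and the cokernel row. -/
noncomputable def snakeKC (i : ℤ) : SnakeInput A :=
  snakeOfHom (dHom S i)
    ((HomologicalComplex.shortExact_iff_degreewise_shortExact S).1 hS i)
    ((HomologicalComplex.shortExact_iff_degreewise_shortExact S).1 hS (i + 1))

include hS in
lemma kerRow_iff_cokerRow (i : ℤ) :
    (kerRow (dHom S i)).ShortExact ↔ (cokerRow (dHom S i)).ShortExact := by
  have h₁ := (HomologicalComplex.shortExact_iff_degreewise_shortExact S).1 hS i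
  have h₂ := (HomologicalComplex.shortExact_iff_degreewise_shortExact S).1 hS (i + 1)
  constructor
  · intro h
    exact aux_L₃_shortExact (snakeKC hS i) h₂.epi_g
      (aux_δ_zero_of_epi (snakeKC hS i) h.epi_g)
  · intro h
    exact aux_L₀_shortExact (snakeKC hS i) h₁.mono_f
      (aux_δ_zero_of_mono (snakeKC hS i) h.mono_f)

/-- The snake input showing that a short exact cokernel row gives a short exact image row. -/
noncomputable def snakeCI (i : ℤ) (h : (cokerRow (dHom S i)).ShortExact) : SnakeInput A where
  L₀ := imRow S i
  L₁ := evalRow S (i + 1)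
  L₂ := cokerRow (dHom S i)
  L₃ := zeroRow
  v₀₁ := imRowι S i
  v₁₂ := cokerRowπ (dHom S i)
  v₂₃ := 0
  w₀₂ := by
    ext <;> · dsimp [imRowι, cokerRowπ]; exact aux_image_ι_comp_cokernel_π _
  w₁₃ := comp_zero
  h₀ := by
    refine isLimitOfIsLimitπ _ ?_ ?_ ?_ <;>
      exact (KernelFork.isLimitMapConeEquiv _ _).symm (aux_imageIsKernel _)
  h₃ := by
    refine isColimitOfIsColimitπ _ ?_ ?_ ?_ <;>
      · refine (CokernelCofork.isColimitMapCoconeEquiv _ _).symm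
          (CokernelCofork.IsColimit.ofEpiOfIsZero _ ?_ (isZero_zero A))
        dsimp [cokerRowπ, π₁, π₂, π₃]
        exact coequalizer.π_epi
  L₁_exact := ((HomologicalComplex.shortExact_iff_degreewise_shortExact S).1 hS (i + 1)).exact
  epi_L₁_g := ((HomologicalComplex.shortExact_iff_degreewise_shortExact S).1 hS (i + 1)).epi_g
  L₂_exact := h.exact
  mono_L₂_f := h.mono_f

/-- The snake input showing that a short exact image row gives a short exact cokernel row. -/
noncomputable def snakeIC (i : ℤ) (h : (imRow S i).ShortExact) : SnakeInput A where
  L₀ := zeroRow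
  L₁ := imRow S i
  L₂ := evalRow S (i + 1)
  L₃ := cokerRow (dHom S i)
  v₀₁ := 0
  v₁₂ := imRowι S i
  v₂₃ := cokerRowπ (dHom S i)
  w₀₂ := zero_comp
  w₁₃ := by
    ext <;> · dsimp [imRowι, cokerRowπ]; exact aux_image_ι_comp_cokernel_π _
  h₀ := by
    refine isLimitOfIsLimitπ _ ?_ ?_ ?_ <;>
      · refine (KernelFork.isLimitMapConeEquiv _ _).symm
          (KernelFork.IsLimit.ofMonoOfIsZero _ ?_ (isZero_zero A))
        dsimp [imRowι, π₁, π₂, π₃]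
        exact MonoFactorisation.m_mono _
  h₃ := by
    refine isColimitOfIsColimitπ _ ?_ ?_ ?_ <;>
      exact (CokernelCofork.isColimitMapCoconeEquiv _ _).symm
        (aux_cokernelπIsCokernelImageι _)
  L₁_exact := h.exact
  epi_L₁_g := h.epi_g
  L₂_exact := ((HomologicalComplex.shortExact_iff_degreewise_shortExact S).1 hS (i + 1)).exact
  mono_L₂_f := ((HomologicalComplex.shortExact_iff_degreewise_shortExact S).1 hS (i + 1)).mono_f

include hS in
lemma imRow_iff_cokerRow (i : ℤ) :
    (imRow S i).ShortExact ↔ (cokerRow (dHom S i)).ShortExact := by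
  have h₂ := (HomologicalComplex.shortExact_iff_degreewise_shortExact S).1 hS (i + 1)
  constructor
  · intro h
    exact aux_L₃_shortExact (snakeIC hS i h) h₂.epi_g
      ((isZero_zero A).eq_of_src _ _)
  · intro h
    exact aux_L₀_shortExact (snakeCI hS i h) h₂.mono_f
      ((isZero_zero A).eq_of_tgt _ _)

/-- The snake input relating cycles in degree `j` and homology in degree `i = j+1`. -/
noncomputable def snakeZH (j i : ℤ) (hij : j + 1 = i) : SnakeInput A where
  L₀ := cyclesRow S j
  L₁ := evalRow S j
  L₂ := cyclesRow S i
  L₃ := homologyRow S i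
  v₀₁ := cyclesRowι S j
  v₁₂ := toCyclesHom S j i
  v₂₃ := homologyπHom S i
  w₀₂ := by
    ext <;> · dsimp [cyclesRowι, toCyclesHom]; exact aux_iCycles_toCycles _ j i
  w₁₃ := by
    ext <;> · dsimp [toCyclesHom, homologyπHom]; exact HomologicalComplex.toCycles_comp_homologyπ _ j i
  h₀ := by
    refine isLimitOfIsLimitπ _ ?_ ?_ ?_ <;>
      exact (KernelFork.isLimitMapConeEquiv _ _).symm
        (aux_cyclesIsKernelToCycles _ j i hij)
  h₃ := by
    refine isColimitOfIsColimitπ _ ?_ ?_ ?_ <;>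
      exact (CokernelCofork.isColimitMapCoconeEquiv _ _).symm
        (HomologicalComplex.homologyIsCokernel _ j i (by simp; omega))
  L₁_exact := ((HomologicalComplex.shortExact_iff_degreewise_shortExact S).1 hS j).exact
  epi_L₁_g := ((HomologicalComplex.shortExact_iff_degreewise_shortExact S).1 hS j).epi_g
  L₂_exact := by
    have := hS.mono_f
    exact HomologicalComplex.cycles_left_exact S hS.exact i
  mono_L₂_f := by
    haveI : Mono (S.f.f i) :=
      ((HomologicalComplex.shortExact_iff_degreewise_shortExact S).1 hS i).mono_f
    dsimp [cyclesRow]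
    infer_instance

end StmtAux2

theorem stmt10 (S : ShortComplex (CochainComplex A ℤ)) (hS : S.ShortExact)
    (h1 : Bdd S.X₁) (h2 : Bdd S.X₂) (h3 : Bdd S.X₃) :
    -- (i) induced sequences on images
    ((∀ i : ℤ, ∃ w, (ShortComplex.mk
        (image.map (f := Arrow.mk (S.X₁.d i (i + 1))) (g := Arrow.mk (S.X₂.d i (i + 1)))
          (Arrow.homMk (u := S.f.f i) (v := S.f.f (i + 1)) (S.f.comm i (i + 1))))
        (image.map (f := Arrow.mk (S.X₂.d i (i + 1))) (g := Arrow.mk (S.X₃.d i (i + 1)))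
          (Arrow.homMk (u := S.g.f i) (v := S.g.f (i + 1)) (S.g.comm i (i + 1)))) w).ShortExact) ↔
    -- (ii) induced sequences on kernels
     (∀ i : ℤ, ∃ w, (ShortComplex.mk
        (kernel.map (S.X₁.d i (i + 1)) (S.X₂.d i (i + 1)) (S.f.f i) (S.f.f (i + 1))
          (S.f.comm i (i + 1)).symm)
        (kernel.map (S.X₂.d i (i + 1)) (S.X₃.d i (i + 1)) (S.g.f i) (S.g.f (i + 1))
          (S.g.comm i (i + 1)).symm) w).ShortExact)) ∧
    -- (ii) ↔ (iii) induced sequences on cohomology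
    ((∀ i : ℤ, ∃ w, (ShortComplex.mk
        (kernel.map (S.X₁.d i (i + 1)) (S.X₂.d i (i + 1)) (S.f.f i) (S.f.f (i + 1))
          (S.f.comm i (i + 1)).symm)
        (kernel.map (S.X₂.d i (i + 1)) (S.X₃.d i (i + 1)) (S.g.f i) (S.g.f (i + 1))
          (S.g.comm i (i + 1)).symm) w).ShortExact) ↔
     (∀ i : ℤ, ∃ w, (ShortComplex.mk
        (HomologicalComplex.homologyMap S.f i)
        (HomologicalComplex.homologyMap S.g i) w).ShortExact)) := by
  clear h1 h2 h3
  have hdeg := (HomologicalComplex.shortExact_iff_degreewise_shortExact S).1 hS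
  -- translations between the rows in the statement and the auxiliary rows
  have him : ∀ i : ℤ, (∃ w, (ShortComplex.mk
      (image.map (f := Arrow.mk (S.X₁.d i (i + 1))) (g := Arrow.mk (S.X₂.d i (i + 1)))
        (Arrow.homMk (u := S.f.f i) (v := S.f.f (i + 1)) (S.f.comm i (i + 1))))
      (image.map (f := Arrow.mk (S.X₂.d i (i + 1))) (g := Arrow.mk (S.X₃.d i (i + 1)))
        (Arrow.homMk (u := S.g.f i) (v := S.g.f (i + 1)) (S.g.comm i (i + 1)))) w).ShortExact)
      ↔ (imRow S i).ShortExact := by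
    intro i
    constructor
    · rintro ⟨w, hw⟩
      exact hw
    · intro h
      exact ⟨(imRow S i).zero, h⟩
  have hker : ∀ i : ℤ, (∃ w, (ShortComplex.mk
      (kernel.map (S.X₁.d i (i + 1)) (S.X₂.d i (i + 1)) (S.f.f i) (S.f.f (i + 1))
        (S.f.comm i (i + 1)).symm)
      (kernel.map (S.X₂.d i (i + 1)) (S.X₃.d i (i + 1)) (S.g.f i) (S.g.f (i + 1))
        (S.g.comm i (i + 1)).symm) w).ShortExact)
      ↔ (kerRow (dHom S i)).ShortExact := by
    intro i
    constructor
    · rintro ⟨w, hw⟩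
      exact hw
    · intro h
      exact ⟨(kerRow (dHom S i)).zero, h⟩
  have hhom : ∀ i : ℤ, (∃ w, (ShortComplex.mk
      (HomologicalComplex.homologyMap S.f i)
      (HomologicalComplex.homologyMap S.g i) w).ShortExact)
      ↔ (homologyRow S i).ShortExact := by
    intro i
    constructor
    · rintro ⟨w, hw⟩
      exact hw
    · intro h
      exact ⟨(homologyRow S i).zero, h⟩
  -- the kernel row is short exact iff the cycles row is
  have hkerZ : ∀ i : ℤ, (kerRow (dHom S i)).ShortExact ↔ (cyclesRow S i).ShortExact :=
    fun i => (ShortComplex.shortExact_iff_of_iso (cyclesRowIsoKerRow S i)).symm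
  constructor
  · -- (i) ↔ (ii)
    constructor
    · intro h i
      rw [hker i, kerRow_iff_cokerRow hS i, ← imRow_iff_cokerRow hS i, ← him i]
      exact h i
    · intro h i
      rw [him i, imRow_iff_cokerRow hS i, ← kerRow_iff_cokerRow hS i, ← hker i]
      exact h i
  · -- (ii) ↔ (iii)
    constructor
    · intro h i
      rw [hhom i]
      have hj : (cyclesRow S (i - 1)).ShortExact := by
        rw [← hkerZ (i - 1), ← hker (i - 1)]
        exact h (i - 1)
      have hi : (cyclesRow S i).ShortExact := by
        rw [← hkerZ i, ← hker i]
        exact h i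
      exact aux_L₃_shortExact (snakeZH hS (i - 1) i (by omega)) hi.epi_g
        (aux_δ_zero_of_epi (snakeZH hS (i - 1) i (by omega)) hj.epi_g)
    · intro h i
      rw [hker i, hkerZ i]
      have hi : (homologyRow S (i + 1)).ShortExact := by
        rw [← hhom (i + 1)]
        exact h (i + 1)
      exact aux_L₀_shortExact (snakeZH hS i (i + 1) rfl) (hdeg i).mono_f
        (aux_δ_zero_of_mono (snakeZH hS i (i + 1) rfl) hi.mono_f)
end

section
/- Let B be an abelian category and 0 → U → V → W → 0 a short exact sequence of bounded complexes over B in which U or W is acyclic. Then for every i, the class of Im(d_V^i) in the Grothendieck group K_0(B) satisfies [Im(d_V^i)] = [Im(d_U^i)] + [Im(d_W^i)]. -/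
open CategoryTheory CategoryTheory.Limits ZeroObject

universe w w' v u

variable {A : Type u} [Category.{v} A] [Abelian A]

section AuxChi

variable {G : Type} [AddCommGroup G] (χ : A → G)



variable {G : Type} [AddCommGroup G] (χ : A → G)

lemma aux_isZero_of_epi {X Y : A} (hX : IsZero X) (f : X ⟶ Y) [Epi f] : IsZero Y := by
  rw [IsZero.iff_id_eq_zero, ← cancel_epi f]
  exact hX.eq_of_src _ _

lemma aux_isZero_of_mono {X Y : A} (hY : IsZero Y) (f : X ⟶ Y) [Mono f] : IsZero X := by
  rw [IsZero.iff_id_eq_zero, ← cancel_mono f]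
  exact hY.eq_of_tgt _ _

lemma aux_isZero_image {X Y : A} (hX : IsZero X) (f : X ⟶ Y) : IsZero (image f) :=
  aux_isZero_of_epi hX (factorThruImage f)

lemma aux_chi_zero
    (hadd : ∀ T : ShortComplex A, T.ShortExact → χ T.X₂ = χ T.X₁ + χ T.X₃)
    {Z : A} (hZ : IsZero Z) : χ Z = 0 := by
  have w : 𝟙 Z ≫ 𝟙 Z = 0 := hZ.eq_of_src _ _
  let T : ShortComplex A := ShortComplex.mk (𝟙 Z) (𝟙 Z) w
  have hT : T.ShortExact := by
    refine ShortComplex.ShortExact.mk' ?_ inferInstance inferInstance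
    rw [ShortComplex.exact_iff_isZero_homology]
    exact aux_isZero_of_epi (aux_isZero_of_mono hZ T.iCycles) T.homologyπ
  have := hadd T hT
  exact add_eq_right.mp this.symm

lemma aux_chi_ker_im
    (hadd : ∀ T : ShortComplex A, T.ShortExact → χ T.X₂ = χ T.X₁ + χ T.X₃)
    {X Y : A} (f : X ⟶ Y) : χ X = χ (kernel f) + χ (image f) := by
  have w : kernel.ι f ≫ factorThruImage f = 0 := by
    rw [← cancel_mono (image.ι f)]
    simp
  let T : ShortComplex A := ShortComplex.mk (kernel.ι f) (factorThruImage f) w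
  have hlim : IsLimit (KernelFork.ofι (kernel.ι f) w) := by
    refine KernelFork.IsLimit.ofι _ _
      (fun {W} k hk => kernel.lift f k ?_) (fun {W} k hk => by simp) ?_
    · rw [← image.fac f, ← Category.assoc, hk, zero_comp]
    · intro W k hk m hm
      rw [← cancel_mono (kernel.ι f), hm]
      simp
  have hT : T.ShortExact :=
    ShortComplex.ShortExact.mk' (T.exact_of_f_is_kernel hlim) inferInstance inferInstance
  exact hadd T hT

/-- iso between cokernel of `abelianImageToKernel` and homology. -/
noncomputable def auxCokerIso (S : ShortComplex A) :
    cokernel S.abelianImageToKernel ≅ S.homology := by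
  let γ := kernel.ι S.g ≫ cokernel.π S.f
  let e : Abelian.image S.f ≅ kernel γ :=
    IsLimit.conePointUniqueUpToIso S.abelianImageToKernelIsKernel (limit.isLimit _)
  have he : e.hom ≫ kernel.ι γ = S.abelianImageToKernel :=
    IsLimit.conePointUniqueUpToIso_hom_comp _ _ WalkingParallelPair.zero
  exact (cokernel.mapIso S.abelianImageToKernel (kernel.ι γ) e (Iso.refl _)
    (by rw [← he]; simp)) ≪≫ (ShortComplex.LeftHomologyData.ofAbelian S).homologyIso.symm

lemma aux_chi_cycles
    (hiso : ∀ {X Y : A}, (X ≅ Y) → χ X = χ Y)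
    (hadd : ∀ T : ShortComplex A, T.ShortExact → χ T.X₂ = χ T.X₁ + χ T.X₃)
    (S : ShortComplex A) :
    χ (kernel S.g) = χ (image S.f) + χ S.homology := by
  let T : ShortComplex A := ShortComplex.mk S.abelianImageToKernel
    (cokernel.π S.abelianImageToKernel) (cokernel.condition _)
  have hT : T.ShortExact :=
    ShortComplex.ShortExact.mk' (T.exact_of_g_is_cokernel (cokernelIsCokernel _))
      inferInstance inferInstance
  have := hadd T hT
  dsimp [T] at this
  rw [this, hiso (Abelian.imageIsoImage S.f), hiso (auxCokerIso S)]



lemma aux_recursion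
    (hiso : ∀ {X Y : A}, (X ≅ Y) → χ X = χ Y)
    (hadd : ∀ T : ShortComplex A, T.ShortExact → χ T.X₂ = χ T.X₁ + χ T.X₃)
    (M : CochainComplex A ℤ) (h k : ℤ) (hk : h + 1 = k) :
    χ (image (M.d k (k + 1))) =
      χ (M.X k) - χ (image (M.d h (h + 1))) - χ (M.homology k) := by
  subst hk
  have hA := aux_chi_ker_im χ hadd (M.d (h + 1) (h + 1 + 1))
  have hB := aux_chi_cycles χ hiso hadd (M.sc' h (h + 1) (h + 1 + 1))
  have hg : (M.sc' h (h + 1) (h + 1 + 1)).g = M.d (h + 1) (h + 1 + 1) := rfl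
  have hf : (M.sc' h (h + 1) (h + 1 + 1)).f = M.d h (h + 1) := rfl
  rw [hg, hf] at hB
  have hH : χ (M.homology (h + 1)) = χ ((M.sc' h (h + 1) (h + 1 + 1)).homology) :=
    hiso (ShortComplex.homologyMapIso
      (M.isoSc' h (h + 1) (h + 1 + 1)
        ((ComplexShape.up ℤ).prev_eq' (by simp [ComplexShape.up_Rel]))
        ((ComplexShape.up ℤ).next_eq' (by simp [ComplexShape.up_Rel]))))
  rw [hA, show χ (kernel (M.d (h + 1) (h + 1 + 1))) = χ (image (M.d h (h + 1))) + _ from hB, hH]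
  abel

lemma aux_homology_add
    (hiso : ∀ {X Y : A}, (X ≅ Y) → χ X = χ Y)
    (hadd : ∀ T : ShortComplex A, T.ShortExact → χ T.X₂ = χ T.X₁ + χ T.X₃)
    (S : ShortComplex (CochainComplex A ℤ)) (hS : S.ShortExact)
    (hac : (∀ i : ℤ, S.X₁.ExactAt i) ∨ (∀ i : ℤ, S.X₃.ExactAt i)) (i : ℤ) :
    χ (S.X₂.homology i) = χ (S.X₁.homology i) + χ (S.X₃.homology i) := by
  have hrel : ∀ j : ℤ, (ComplexShape.up ℤ).Rel j (j + 1) := by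
    intro j; simp [ComplexShape.up_Rel]
  have hrel' : (ComplexShape.up ℤ).Rel (i - 1) i := by simp [ComplexShape.up_Rel]
  have hδ1 : hS.δ (i - 1) i hrel' = 0 := by
    rcases hac with h | h
    · exact ((HomologicalComplex.exactAt_iff_isZero_homology _ _).1 (h i)).eq_of_tgt _ _
    · exact ((HomologicalComplex.exactAt_iff_isZero_homology _ _).1 (h (i - 1))).eq_of_src _ _
  have hδ2 : hS.δ i (i + 1) (hrel i) = 0 := by
    rcases hac with h | h
    · exact ((HomologicalComplex.exactAt_iff_isZero_homology _ _).1 (h (i + 1))).eq_of_tgt _ _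
    · exact ((HomologicalComplex.exactAt_iff_isZero_homology _ _).1 (h i)).eq_of_src _ _
  have hmono : Mono (HomologicalComplex.homologyMap S.f i) :=
    (hS.homology_exact₁ (i - 1) i hrel').mono_g hδ1
  have hepi : Epi (HomologicalComplex.homologyMap S.g i) :=
    (hS.homology_exact₃ i (i + 1) (hrel i)).epi_f hδ2
  exact hadd _ (ShortComplex.ShortExact.mk' (hS.homology_exact₂ i) hmono hepi)

end AuxChi

/-- The class of `Im(d_V^i)` in the Grothendieck group `K₀` is additive on a short exact
sequence of bounded complexes whose first or third term is acyclic.  (The Grothendieck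
group is characterized by its universal property: the statement is formulated for an
arbitrary additive-on-short-exact-sequences, iso-invariant function `χ` with values in an
abelian group, i.e. for an arbitrary factorization through `K₀`.) -/
theorem stmt11 (S : ShortComplex (CochainComplex A ℤ)) (hS : S.ShortExact)
    (h1 : Bdd S.X₁) (h2 : Bdd S.X₂) (h3 : Bdd S.X₃)
    (hac : Acyc S.X₁ ∨ Acyc S.X₃)
    (G : Type) [AddCommGroup G] (χ : A → G)
    (hiso : ∀ {X Y : A}, (X ≅ Y) → χ X = χ Y)
    (hadd : ∀ T : ShortComplex A, T.ShortExact → χ T.X₂ = χ T.X₁ + χ T.X₃)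
    (i : ℤ) :
    χ (image (S.X₂.d i (i + 1))) =
      χ (image (S.X₁.d i (i + 1))) + χ (image (S.X₃.d i (i + 1))) := by
  obtain ⟨a₁, b₁, hb₁⟩ := h1
  obtain ⟨a₂, b₂, hb₂⟩ := h2
  obtain ⟨a₃, b₃, hb₃⟩ := h3
  set a := min a₁ (min a₂ a₃) - 1 with ha
  have ha1 : a < a₁ := by
    have := min_le_left a₁ (min a₂ a₃); omega
  have ha2 : a < a₂ := by
    have h' := min_le_right a₁ (min a₂ a₃); have := min_le_left a₂ a₃; omega
  have ha3 : a < a₃ := by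
    have h' := min_le_right a₁ (min a₂ a₃); have := min_le_right a₂ a₃; omega
  have hz : ∀ j : ℤ, j ≤ a →
      χ (image (S.X₂.d j (j + 1))) = 0 ∧ χ (image (S.X₁.d j (j + 1))) = 0 ∧
        χ (image (S.X₃.d j (j + 1))) = 0 := by
    intro j hj
    exact ⟨aux_chi_zero χ hadd (aux_isZero_image (hb₂ j (Or.inl (by omega))) _),
      aux_chi_zero χ hadd (aux_isZero_image (hb₁ j (Or.inl (by omega))) _),
      aux_chi_zero χ hadd (aux_isZero_image (hb₃ j (Or.inl (by omega))) _)⟩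
  have hdeg := (HomologicalComplex.shortExact_iff_degreewise_shortExact S).1 hS
  have hE : ∀ n : ℤ, χ (S.X₂.X n) = χ (S.X₁.X n) + χ (S.X₃.X n) :=
    fun n => hadd _ (hdeg n)
  have key : ∀ j : ℤ, a ≤ j →
      χ (image (S.X₂.d j (j + 1))) =
        χ (image (S.X₁.d j (j + 1))) + χ (image (S.X₃.d j (j + 1))) := by
    refine Int.le_induction ?_ ?_
    · obtain ⟨u, v, w⟩ := hz a le_rfl
      rw [u, v, w, add_zero]
    · intro j _ ih
      have r₁ := aux_recursion χ hiso hadd S.X₁ j (j + 1) rfl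
      have r₂ := aux_recursion χ hiso hadd S.X₂ j (j + 1) rfl
      have r₃ := aux_recursion χ hiso hadd S.X₃ j (j + 1) rfl
      have hH := aux_homology_add χ hiso hadd S hS hac (j + 1)
      rw [r₁, r₂, r₃, ih, hE (j + 1), hH]
      abel
  rcases le_or_gt a i with h | h
  · exact key i h
  · obtain ⟨u, v, w⟩ := hz i (by omega)
    rw [u, v, w, add_zero]
end

section
/- Let A be a finitary hereditary abelian category over a finite field. For objects M, B, A, N of A, the set of morphisms g: B → A with Ker(g) ≅ M and Coker(g) ≅ N is in bijection with the disjoint union over isomorphism classes [L] of bounded complexes with H^n(L) ≅ M and H^{n+1}(L) ≅ N of the sets Ext^1_{C^b(A)}(U_{B,n}, U_{A,n+1})_L of equivalence classes of extensions of U_{B,n} by U_{A,n+1} with middle term isomorphic to L. -/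
open CategoryTheory CategoryTheory.Limits ZeroObject

universe w w' v u

variable {A : Type u} [Category.{v} A] [Abelian A]

section Counting

variable (C : Type w) [Category.{w'} C] [Abelian C]

variable {C} in
/-- An extension of `L` by `M`: a short exact sequence `0 → M → E → L → 0`. -/
structure Extn (M L : C) where
  E : C
  ι : M ⟶ E
  π : E ⟶ L
  w : ι ≫ π = 0
  shortExact : (ShortComplex.mk ι π w).ShortExact

variable {C} in
/-- Equivalence of extensions (isomorphism of the middle terms compatible with the maps). -/
def ExtnEquiv {M L : C} (e e' : Extn M L) : Prop :=
  ∃ φ : e.E ≅ e'.E, e.ι ≫ φ.hom = e'.ι ∧ φ.hom ≫ e'.π = e.π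

variable {C} in
/-- `|Ext¹(L, M)|`: the number of equivalence classes of extensions of `L` by `M`. -/
noncomputable def ext1Card (L M : C) : ℕ :=
  Nat.card (Quot (ExtnEquiv (M := M) (L := L)))

variable {C} in
/-- `|Ext¹(L, M)_X|`: the number of equivalence classes of extensions of `L` by `M`
whose middle term is isomorphic to `X`. -/
noncomputable def extCardWith (L M X : C) : ℕ :=
  Nat.card (Quot (fun e e' : {e : Extn M L // Nonempty (e.E ≅ X)} => ExtnEquiv e.1 e'.1))

variable {C} in
/-- `|Hom(X, Y)|`. -/
noncomputable def homCard (X Y : C) : ℕ := Nat.card (X ⟶ Y)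

variable {C} in
/-- `a_X = |Aut X|`. -/
noncomputable def autCard (X : C) : ℕ := Nat.card (Aut X)

/-- The set of isomorphism classes of objects of `C`. -/
abbrev IsoCls : Type _ := Quotient (CategoryTheory.isIsomorphicSetoid C)

variable {C} in
/-- The Hall number `g^X_{AB}`: the number of subobjects of `X` isomorphic to `B`
with quotient isomorphic to `A`. -/
noncomputable def hallNum (X A B : C) : ℕ :=
  Nat.card {S : Subobject X // Nonempty ((S : C) ≅ B) ∧ Nonempty (cokernel S.arrow ≅ A)}

variable {C} in
/-- `V(M, B, A, N)`: the set of exact sequences `0 → M → B → A → N → 0`. -/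
def Vset (M B A N : C) : Type _ :=
  {t : (M ⟶ B) × (B ⟶ A) × (A ⟶ N) //
    Mono t.1 ∧ Epi t.2.2 ∧
    ∃ w1 : t.1 ≫ t.2.1 = 0, (ShortComplex.mk t.1 t.2.1 w1).Exact ∧
    ∃ w2 : t.2.1 ≫ t.2.2 = 0, (ShortComplex.mk t.2.1 t.2.2 w2).Exact}

variable {C} in
/-- `γ^{MN}_{AB} = |V(M,B,A,N)| / (a_A a_B)`. -/
noncomputable def gammaC (X Y M N : C) : ℚ :=
  (Nat.card (Vset M Y X N) : ℚ) / ((autCard X : ℚ) * (autCard Y : ℚ))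

end Counting

section Aux

open HomologicalComplex

variable {X Y : A}

/-- The two-term complex with `Y` in degree `n`, `X` in degree `n+1` and differential `g`. -/
noncomputable def Dc (g : Y ⟶ X) (n : ℤ) : CochainComplex A ℤ where
  X i := if i = n then Y else if i = n + 1 then X else 0
  d i j := if h : i = n ∧ j = n + 1 then
      eqToHom (by rw [if_pos h.1]) ≫ g ≫
        eqToHom (by rw [if_neg (show ¬ j = n by omega), if_pos h.2]) else 0
  shape i j hij := by
    rw [dif_neg]
    rintro ⟨rfl, rfl⟩
    exact hij (by simp [ComplexShape.up_Rel])
  d_comp_d' i j k _ _ := by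
    by_cases h1 : i = n ∧ j = n + 1
    · rw [dif_neg (show ¬ (j = n ∧ k = n + 1) by omega)]
      exact comp_zero
    · rw [dif_neg h1, zero_comp]

lemma Dc_X_n (g : Y ⟶ X) (n : ℤ) : (Dc g n).X n = Y := if_pos rfl

lemma Dc_X_n1 (g : Y ⟶ X) (n : ℤ) : (Dc g n).X (n + 1) = X := by
  show (if n + 1 = n then Y else if n + 1 = n + 1 then X else 0) = X
  rw [if_neg (show ¬ (n + 1 : ℤ) = n by omega), if_pos rfl]

lemma Dc_X_isZero (g : Y ⟶ X) (n i : ℤ) (h1 : i ≠ n) (h2 : i ≠ n + 1) :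
    IsZero ((Dc g n).X i) := by
  show IsZero (if i = n then Y else if i = n + 1 then X else 0)
  rw [if_neg h1, if_neg h2]
  exact isZero_zero A

lemma Dc_d_eq (g : Y ⟶ X) (n : ℤ) :
    (Dc g n).d n (n + 1) = eqToHom (Dc_X_n g n) ≫ g ≫ eqToHom (Dc_X_n1 g n).symm := by
  show (if h : n = n ∧ n + 1 = n + 1 then _ else 0) = _
  exact dif_pos ⟨rfl, rfl⟩

lemma Dc_d_zero (g : Y ⟶ X) (n i j : ℤ) (h : ¬ (i = n ∧ j = n + 1)) :
    (Dc g n).d i j = 0 := dif_neg h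

/-- The inclusion `U_{X,n+1} ⟶ Dc g n`. -/
noncomputable def DcI (g : Y ⟶ X) (n : ℤ) : Uc X (n + 1) ⟶ Dc g n :=
  HomologicalComplex.mkHomFromSingle (eqToHom (Dc_X_n1 g n).symm)
    (fun i _ => by rw [Dc_d_zero g n _ _ (by omega), comp_zero])

/-- The projection `Dc g n ⟶ U_{Y,n}`. -/
noncomputable def DcP (g : Y ⟶ X) (n : ℤ) : Dc g n ⟶ Uc Y n :=
  HomologicalComplex.mkHomToSingle (eqToHom (Dc_X_n g n))
    (fun i _ => by rw [Dc_d_zero g n _ _ (by omega), zero_comp])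

lemma DcI_f (g : Y ⟶ X) (n : ℤ) :
    (DcI g n).f (n + 1) =
      (HomologicalComplex.singleObjXSelf (ComplexShape.up ℤ) (n + 1) X).hom ≫
        eqToHom (Dc_X_n1 g n).symm :=
  HomologicalComplex.mkHomFromSingle_f _ _

lemma DcP_f (g : Y ⟶ X) (n : ℤ) :
    (DcP g n).f n = eqToHom (Dc_X_n g n) ≫
      (HomologicalComplex.singleObjXSelf (ComplexShape.up ℤ) n Y).inv :=
  HomologicalComplex.mkHomToSingle_f _ _

lemma DcIP (g : Y ⟶ X) (n : ℤ) : DcI g n ≫ DcP g n = 0 := by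
  ext i
  by_cases h : i = n + 1
  · subst h
    exact (HomologicalComplex.isZero_single_obj_X (ComplexShape.up ℤ) n Y (n + 1)
      (by omega)).eq_of_tgt _ _
  · exact (HomologicalComplex.isZero_single_obj_X (ComplexShape.up ℤ) (n + 1) X i h).eq_of_src _ _

lemma Dc_shortExact (g : Y ⟶ X) (n : ℤ) :
    (ShortComplex.mk (DcI g n) (DcP g n) (DcIP g n)).ShortExact := by
  apply HomologicalComplex.shortExact_of_degreewise_shortExact
  intro i
  by_cases h1 : i = n
  · obtain rfl : n = i := h1.symm
    refine (ShortComplex.Splitting.ofIsZeroOfIsIso _ ?_ ?_).shortExact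
    · exact HomologicalComplex.isZero_single_obj_X (ComplexShape.up ℤ) (n + 1) X n (by omega)
    · show IsIso ((DcP g n).f n)
      rw [DcP_f]
      exact IsIso.comp_isIso' inferInstance (Iso.isIso_inv _)
  · by_cases h2 : i = n + 1
    · subst h2
      refine (ShortComplex.Splitting.ofIsIsoOfIsZero _ ?_ ?_).shortExact
      · show IsIso ((DcI g n).f (n + 1))
        rw [DcI_f]
        exact IsIso.comp_isIso' (Iso.isIso_hom _) inferInstance
      · exact HomologicalComplex.isZero_single_obj_X (ComplexShape.up ℤ) n Y (n + 1) (by omega)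
    · refine (ShortComplex.Splitting.ofIsZeroOfIsIso _ ?_ ?_).shortExact
      · exact HomologicalComplex.isZero_single_obj_X (ComplexShape.up ℤ) (n + 1) X i h2
      · exact ⟨⟨0, (Dc_X_isZero g n i h1 h2).eq_of_src _ _,
          (HomologicalComplex.isZero_single_obj_X (ComplexShape.up ℤ) n Y i h1).eq_of_src _ _⟩⟩

/-- The extension of `U_{Y,n}` by `U_{X,n+1}` attached to `g : Y ⟶ X`. -/
noncomputable abbrev extnOf (g : Y ⟶ X) (n : ℤ) : Extn (Uc X (n + 1)) (Uc Y n) :=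
  ⟨Dc g n, DcI g n, DcP g n, DcIP g n, Dc_shortExact g n⟩

/-- The short complex of `Dc g n` around degree `n` is isomorphic to `0 ⟶ Y ⟶ X`. -/
noncomputable def DcSc1Iso (g : Y ⟶ X) (n : ℤ) :
    (Dc g n).sc' (n - 1) n (n + 1) ≅
      ShortComplex.mk (0 : (Dc g n).X (n - 1) ⟶ Y) g zero_comp :=
  ShortComplex.isoMk (Iso.refl _) (eqToIso (Dc_X_n g n)) (eqToIso (Dc_X_n1 g n))
    (by
      show 𝟙 _ ≫ (0 : (Dc g n).X (n - 1) ⟶ Y) = (Dc g n).d (n - 1) n ≫ eqToHom (Dc_X_n g n)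
      rw [Dc_d_zero g n _ _ (by omega)]
      simp)
    (by
      show eqToHom (Dc_X_n g n) ≫ g = (Dc g n).d n (n + 1) ≫ eqToHom (Dc_X_n1 g n)
      rw [Dc_d_eq g n]
      simp)

/-- The short complex of `Dc g n` around degree `n+1` is isomorphic to `Y ⟶ X ⟶ 0`. -/
noncomputable def DcSc2Iso (g : Y ⟶ X) (n : ℤ) :
    (Dc g n).sc' n (n + 1) (n + 2) ≅
      ShortComplex.mk g (0 : X ⟶ (Dc g n).X (n + 2)) comp_zero :=
  ShortComplex.isoMk (eqToIso (Dc_X_n g n)) (eqToIso (Dc_X_n1 g n)) (Iso.refl _)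
    (by
      show eqToHom (Dc_X_n g n) ≫ g = (Dc g n).d n (n + 1) ≫ eqToHom (Dc_X_n1 g n)
      rw [Dc_d_eq g n]
      simp)
    (by
      show eqToHom (Dc_X_n1 g n) ≫ (0 : X ⟶ (Dc g n).X (n + 2)) = (Dc g n).d (n + 1) (n + 2) ≫ 𝟙 _
      rw [Dc_d_zero g n _ _ (by omega)]
      simp)

/-- `H^n(Dc g n) ≅ ker g`. -/
noncomputable def DcHomologyKer (g : Y ⟶ X) (n : ℤ) : (Dc g n).homology n ≅ kernel g :=
  (Dc g n).homologyIsoSc' (n - 1) n (n + 1) (by rw [CochainComplex.prev]) (by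
    rw [CochainComplex.next]) ≪≫
    ShortComplex.homologyMapIso (DcSc1Iso g n) ≪≫
    (ShortComplex.LeftHomologyData.ofHasKernel _ rfl).homologyIso

/-- `H^{n+1}(Dc g n) ≅ coker g`. -/
noncomputable def DcHomologyCoker (g : Y ⟶ X) (n : ℤ) : (Dc g n).homology (n + 1) ≅ cokernel g :=
  (Dc g n).homologyIsoSc' n (n + 1) (n + 2) (by rw [CochainComplex.prev]; omega) (by
    rw [CochainComplex.next]; omega) ≪≫
    ShortComplex.homologyMapIso (DcSc2Iso g n) ≪≫
    (ShortComplex.LeftHomologyData.ofHasCokernel _ rfl).homologyIso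

lemma extnEquiv_equivalence {C : Type w} [Category.{w'} C] [Abelian C] {M L : C}
    (P : Extn M L → Prop) :
    Equivalence (fun e e' : {e : Extn M L // P e} => ExtnEquiv e.1 e'.1) where
  refl e := ⟨Iso.refl _, by simp, by simp⟩
  symm {e e'} h := by
    obtain ⟨φ, h1, h2⟩ := h
    exact ⟨φ.symm, by rw [← h1]; simp, by rw [← h2]; simp⟩
  trans {e e' e''} h h' := by
    obtain ⟨φ, h1, h2⟩ := h
    obtain ⟨ψ, h1', h2'⟩ := h'
    exact ⟨φ ≪≫ ψ, by simp [reassoc_of% h1, h1'], by simp [h2', h2]⟩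

lemma extnOf_injective {g g' : Y ⟶ X} {n : ℤ}
    (h : ExtnEquiv (extnOf g n) (extnOf g' n)) : g = g' := by
  obtain ⟨φ, h1, h2⟩ := h
  replace h1 : DcI g n ≫ φ.hom = DcI g' n := h1
  replace h2 : φ.hom ≫ DcP g' n = DcP g n := h2
  have hX2 : (Dc g n).X n = (Dc g' n).X n := (Dc_X_n g n).trans (Dc_X_n g' n).symm
  have hX3 : (Dc g n).X (n + 1) = (Dc g' n).X (n + 1) :=
    (Dc_X_n1 g n).trans (Dc_X_n1 g' n).symm
  haveI : IsIso ((DcP g' n).f n) := by rw [DcP_f]; exact IsIso.comp_isIso' inferInstance (Iso.isIso_inv _)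
  haveI : IsIso ((DcI g n).f (n + 1)) := by rw [DcI_f]; exact IsIso.comp_isIso' (Iso.isIso_hom _) inferInstance
  have h2n : φ.hom.f n ≫ (DcP g' n).f n = (DcP g n).f n := by
    rw [← HomologicalComplex.comp_f, h2]
  have h1n : (DcI g n).f (n + 1) ≫ φ.hom.f (n + 1) = (DcI g' n).f (n + 1) := by
    rw [← HomologicalComplex.comp_f, h1]
  have hn : φ.hom.f n = eqToHom hX2 := by
    rw [← cancel_mono ((DcP g' n).f n), h2n, DcP_f, DcP_f]
    exact (eqToHom_trans_assoc hX2 _ _).symm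
  have hn1 : φ.hom.f (n + 1) = eqToHom hX3 := by
    rw [← cancel_epi ((DcI g n).f (n + 1)), h1n, DcI_f, DcI_f]
    exact ((Category.assoc _ _ _).trans (by rw [eqToHom_trans])).symm
  have hcomm : φ.hom.f n ≫ (Dc g' n).d n (n + 1) = (Dc g n).d n (n + 1) ≫ φ.hom.f (n + 1) :=
    φ.hom.comm n (n + 1)
  rw [hn, hn1, Dc_d_eq g n, Dc_d_eq g' n] at hcomm
  simp only [Category.assoc, eqToHom_trans, eqToHom_trans_assoc] at hcomm
  rw [← cancel_epi (eqToHom (hX2.trans (Dc_X_n g' n))),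
    ← cancel_mono (eqToHom ((Dc_X_n1 g n).symm.trans hX3))]
  simp only [Category.assoc]
  exact hcomm.symm

set_option maxHeartbeats 1000000 in
lemma extnOf_surjective (n : ℤ) (e : Extn (Uc X (n + 1)) (Uc Y n)) :
    ∃ g : Y ⟶ X, ExtnEquiv (extnOf g n) e := by
  have hdeg := (HomologicalComplex.shortExact_iff_degreewise_shortExact _).1 e.shortExact
  have hπ : IsIso (e.π.f n) :=
    ((hdeg n).isIso_g_iff).2
      (HomologicalComplex.isZero_single_obj_X (ComplexShape.up ℤ) (n + 1) X n (by omega))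
  have hι : IsIso (e.ι.f (n + 1)) :=
    ((hdeg (n + 1)).isIso_f_iff).2
      (HomologicalComplex.isZero_single_obj_X (ComplexShape.up ℤ) n Y (n + 1) (by omega))
  have hz : ∀ i, i ≠ n → i ≠ n + 1 → IsZero (e.E.X i) := by
    intro i hi1 hi2
    have : IsIso (e.π.f i) :=
      ((hdeg i).isIso_g_iff).2
        (HomologicalComplex.isZero_single_obj_X (ComplexShape.up ℤ) (n + 1) X i hi2)
    exact IsZero.of_iso
      (HomologicalComplex.isZero_single_obj_X (ComplexShape.up ℤ) n Y i hi1) (@asIso _ _ _ _ (e.π.f i) this)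
  refine ⟨(HomologicalComplex.singleObjXSelf (ComplexShape.up ℤ) n Y).inv ≫ inv (e.π.f n) (I := hπ) ≫
      e.E.d n (n + 1) ≫ inv (e.ι.f (n + 1)) ≫
      (HomologicalComplex.singleObjXSelf (ComplexShape.up ℤ) (n + 1) X).hom,
    HomologicalComplex.Hom.isoOfComponents (fun i =>
      if h1 : i = n then
        eqToIso (by rw [h1]; exact Dc_X_n _ n) ≪≫
          (HomologicalComplex.singleObjXSelf (ComplexShape.up ℤ) n Y).symm ≪≫
          (@asIso _ _ _ _ (e.π.f n) hπ).symm ≪≫ eqToIso (by rw [h1])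
      else if h2 : i = n + 1 then
        eqToIso (by rw [h2]; exact Dc_X_n1 _ n) ≪≫
          (HomologicalComplex.singleObjXSelf (ComplexShape.up ℤ) (n + 1) X).symm ≪≫
          @asIso _ _ _ _ (e.ι.f (n + 1)) hι ≪≫ eqToIso (by rw [h2])
      else (Dc_X_isZero _ n i h1 h2).iso (hz i h1 h2)) (fun i j hij => ?_), ?_, ?_⟩
  · have hj : i + 1 = j := hij
    try dsimp only [extnOf]
    by_cases h1 : i = n
    · obtain rfl : n = i := h1.symm
      obtain rfl : j = n + 1 := hj.symm
      try dsimp only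
      rw [dif_pos rfl, dif_neg (show ¬ (n + 1 : ℤ) = n by omega), dif_pos rfl]
      rw [Dc_d_eq _ n]
      simp
      erw [Iso.trans_hom, Iso.refl_hom, Category.comp_id, Iso.symm_hom, asIso_inv, Category.assoc,
        Iso.hom_inv_id_assoc, IsIso.inv_hom_id, Category.comp_id]
    · by_cases h2 : i = n + 1
      · subst h2
        rw [Dc_d_zero _ n _ _ (by omega), zero_comp,
          (hz j (by omega) (by omega)).eq_of_tgt (e.E.d (n + 1) j) 0, comp_zero]
      · exact (Dc_X_isZero _ n i h1 h2).eq_of_src _ _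
  · ext i
    try dsimp only [extnOf]
    by_cases h : i = n + 1
    · subst h
      rw [HomologicalComplex.comp_f, DcI_f]
      dsimp only [HomologicalComplex.Hom.isoOfComponents]
      rw [dif_neg (show ¬ (n + 1 : ℤ) = n by omega), dif_pos rfl]
      simp
      erw [Category.assoc, eqToHom_trans_assoc, eqToHom_trans_assoc, eqToHom_trans_assoc]
      exact Category.id_comp _
      exact (HomologicalComplex.single_obj_X_self _ _ _).symm
      exact HomologicalComplex.single_obj_X_self _ _ _
    · exact (HomologicalComplex.isZero_single_obj_X (ComplexShape.up ℤ)
        (n + 1) X i h).eq_of_src _ _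
  · ext i
    try dsimp only [extnOf]
    by_cases h : i = n
    · obtain rfl : n = i := h.symm
      rw [HomologicalComplex.comp_f, DcP_f]
      dsimp only [HomologicalComplex.Hom.isoOfComponents]
      rw [dif_pos rfl]
      simp
      have key : ((@asIso _ _ _ _ (e.π.f n) hπ).symm ≪≫ Iso.refl (e.E.X n)).hom ≫ e.π.f n = 𝟙 _ := by
        simp
      erw [key]
      exact congrArg _ (Category.comp_id _)
    · exact (HomologicalComplex.isZero_single_obj_X (ComplexShape.up ℤ)
        n Y i h).eq_of_tgt _ _

end Aux

theorem stmt12 (k : Type) [Field k] [Finite k] [CategoryTheory.Linear k A]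
    [∀ X Y : A, Finite (X ⟶ Y)]
    (hfinext : ∀ X Y : A, Finite (Quot (ExtnEquiv (M := Y) (L := X))))
    [HasExt.{w} A]
    (hered : ∀ (X Y : A) (n : ℕ), 2 ≤ n → Subsingleton (Abelian.Ext X Y n))
    (M X Y N : A) (n : ℤ) :
    Nonempty
      ({g : Y ⟶ X // Nonempty (kernel g ≅ M) ∧ Nonempty (cokernel g ≅ N)} ≃
        Quot (fun e e' :
            {e : Extn (Uc X (n + 1)) (Uc Y n) //
              Nonempty (e.E.homology n ≅ M) ∧ Nonempty (e.E.homology (n + 1) ≅ N)} =>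
          ExtnEquiv e.1 e'.1)) := by
  refine ⟨Equiv.ofBijective (fun gp => Quot.mk _ ⟨extnOf gp.1 n,
      ⟨(DcHomologyKer gp.1 n).trans gp.2.1.some⟩,
      ⟨(DcHomologyCoker gp.1 n).trans gp.2.2.some⟩⟩) ⟨?_, ?_⟩⟩
  · intro g1 g2 hfg
    have hgen := Quot.eqvGen_exact hfg
    rw [Equivalence.eqvGen_iff (extnEquiv_equivalence _)] at hgen
    exact Subtype.ext (extnOf_injective hgen)
  · intro q
    refine Quot.inductionOn q ?_
    rintro ⟨e, he1, he2⟩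
    obtain ⟨g₀, hequiv⟩ := extnOf_surjective n e
    obtain ⟨ψ, -, -⟩ := id hequiv
    refine ⟨⟨g₀, ⟨(DcHomologyKer g₀ n).symm ≪≫
        (HomologicalComplex.homologyFunctor A (ComplexShape.up ℤ) n).mapIso ψ ≪≫ he1.some⟩,
      ⟨(DcHomologyCoker g₀ n).symm ≪≫
        (HomologicalComplex.homologyFunctor A (ComplexShape.up ℤ) (n + 1)).mapIso ψ ≪≫
        he2.some⟩⟩, ?_⟩
    exact Quot.sound hequiv
end

section
/- Let A be a finitary hereditary abelian category over a finite field. For objects A, B, C of A, the Hall number satisfies the homological formula g^C_{AB} = (|Ext^1_A(A,B)_C| / |Hom_A(A,B)|) · (a_C / (a_A a_B)), where Ext^1_A(A,B)_C is the set of extension classes of A by B with middle term isomorphic to C. -/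
open CategoryTheory CategoryTheory.Limits ZeroObject

universe w w' v u

variable {A : Type u} [Category.{v} A] [Abelian A]

set_option linter.unusedSectionVars false

section OrbitCounting

open MulAction

lemma orbit_count {G S : Type*} [Group G] [Finite G] [Finite S] [MulAction G S] (n : ℕ)
    (hn : ∀ s : S, Nat.card (stabilizer G s) = n) :
    Nat.card S * n = Nat.card (Quotient (orbitRel G S)) * Nat.card G := by
  classical
  cases nonempty_fintype G
  cases nonempty_fintype S
  rw [Nat.card_congr (selfEquivSigmaOrbitsQuotientStabilizer G S)]
  rw [Nat.card_eq_fintype_card, Fintype.card_sigma, Finset.sum_mul]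
  have : ∀ ω : Quotient (orbitRel G S),
      Fintype.card (G ⧸ stabilizer G ω.out) * n = Nat.card G := by
    intro ω
    rw [← hn ω.out, ← Nat.card_eq_fintype_card,
      ← Subgroup.card_eq_card_quotient_mul_card_subgroup]
  simp_rw [this]
  rw [Finset.sum_const, smul_eq_mul, Finset.card_univ,
    ← Nat.card_eq_fintype_card (α := _root_.Quotient (orbitRel G S))]

end OrbitCounting

section SESDev

open MulAction

variable {A : Type u} [Category.{v} A] [Abelian A]

/-- Short exact sequences `0 → Y → Z → X → 0` as a subtype of pairs of morphisms. -/
def SES (Y Z X : A) : Type _ :=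
  {q : (Y ⟶ Z) × (Z ⟶ X) // ∃ w : q.1 ≫ q.2 = 0, (ShortComplex.mk q.1 q.2 w).ShortExact}

instance {Y Z X : A} [∀ X Y : A, Finite (X ⟶ Y)] : Finite (SES Y Z X) := by
  unfold SES; infer_instance

namespace SES
variable {Y Z X : A}

def i (q : SES Y Z X) : Y ⟶ Z := q.1.1
def p (q : SES Y Z X) : Z ⟶ X := q.1.2
lemma w (q : SES Y Z X) : q.i ≫ q.p = 0 := q.2.choose
def sc (q : SES Y Z X) : CategoryTheory.ShortComplex A := ShortComplex.mk q.i q.p q.w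
lemma se (q : SES Y Z X) : q.sc.ShortExact := q.2.choose_spec

instance (q : SES Y Z X) : Mono q.i := q.se.mono_f
instance (q : SES Y Z X) : Epi q.p := q.se.epi_g

lemma exact (q : SES Y Z X) : q.sc.Exact := q.se.exact

@[ext] lemma ext {q q' : SES Y Z X} (h1 : q.i = q'.i) (h2 : q.p = q'.p) : q = q' :=
  Subtype.ext (Prod.ext h1 h2)

/-- Build an `SES` from a short exact structure after twisting by isomorphisms. -/
def twist (q : SES Y Z X) {Y' Z' X' : A} (u : Y' ≅ Y) (v : Z ≅ Z') (t : X ≅ X') :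
    SES Y' Z' X' := by
  refine ⟨(u.hom ≫ q.i ≫ v.hom, v.inv ≫ q.p ≫ t.hom), ?_, ?_⟩
  · simp [reassoc_of% q.w]
  · refine ShortComplex.shortExact_of_iso ?_ q.se
    refine ShortComplex.isoMk u.symm v t ?_ ?_ <;> simp [sc]

@[simp] lemma twist_i (q : SES Y Z X) {Y' Z' X' : A} (u : Y' ≅ Y) (v : Z ≅ Z') (t : X ≅ X') :
    (q.twist u v t).i = u.hom ≫ q.i ≫ v.hom := rfl
@[simp] lemma twist_p (q : SES Y Z X) {Y' Z' X' : A} (u : Y' ≅ Y) (v : Z ≅ Z') (t : X ≅ X') :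
    (q.twist u v t).p = v.inv ≫ q.p ≫ t.hom := rfl

@[simp] lemma aut_one_hom : (1 : Aut X).hom = 𝟙 X := rfl
@[simp] lemma aut_one_inv : (1 : Aut X).inv = 𝟙 X := rfl
@[simp] lemma aut_mul_hom (f g : Aut X) : (f * g).hom = g.hom ≫ f.hom := rfl
@[simp] lemma aut_mul_inv (f g : Aut X) : (f * g).inv = f.inv ≫ g.inv := rfl

instance smulXY : SMul (Aut X × Aut Y) (SES Y Z X) :=
  ⟨fun g q => q.twist g.2.symm (Iso.refl Z) g.1⟩

@[simp] lemma smulXY_i (g : Aut X × Aut Y) (q : SES Y Z X) : (g • q).i = g.2.inv ≫ q.i := by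
  show (q.twist g.2.symm (Iso.refl Z) g.1).i = _; exact congrArg (g.2.inv ≫ ·) (Category.comp_id q.i)
@[simp] lemma smulXY_p (g : Aut X × Aut Y) (q : SES Y Z X) : (g • q).p = q.p ≫ g.1.hom := by
  show (q.twist g.2.symm (Iso.refl Z) g.1).p = _; exact Category.id_comp _

/-- The action of `Aut X × Aut Y` on short exact sequences. -/
instance actXY : MulAction (Aut X × Aut Y) (SES Y Z X) where
  one_smul q := by ext <;> simp
  mul_smul g h q := by ext <;> simp

instance smulZ : SMul (Aut Z) (SES Y Z X) :=
  ⟨fun g q => q.twist (Iso.refl Y) g (Iso.refl X)⟩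

@[simp] lemma smulZ_i (g : Aut Z) (q : SES Y Z X) : (g • q).i = q.i ≫ g.hom := by
  show (q.twist (Iso.refl Y) g (Iso.refl X)).i = _; exact Category.id_comp _
@[simp] lemma smulZ_p (g : Aut Z) (q : SES Y Z X) : (g • q).p = g.inv ≫ q.p := by
  show (q.twist (Iso.refl Y) g (Iso.refl X)).p = _; exact congrArg (g.inv ≫ ·) (Category.comp_id q.p)

/-- The action of `Aut Z` on short exact sequences. -/
instance actZ : MulAction (Aut Z) (SES Y Z X) where
  one_smul q := by ext <;> simp
  mul_smul g h q := by ext <;> simp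

/-- The action of `Aut X × Aut Y` is free. -/
lemma stabXY_card (q : SES Y Z X) : Nat.card (stabilizer (Aut X × Aut Y) q) = 1 := by
  have : stabilizer (Aut X × Aut Y) q = ⊥ := by
    rw [Subgroup.eq_bot_iff_forall]
    intro g hg
    rw [mem_stabilizer_iff] at hg
    have h1 : g.2.inv ≫ q.i = 𝟙 Y ≫ q.i := by
      rw [Category.id_comp, ← smulXY_i g q, hg]
    have h2 : q.p ≫ g.1.hom = q.p ≫ 𝟙 X := by
      rw [Category.comp_id, ← smulXY_p g q, hg]
    have h1' : g.2.inv = 𝟙 Y := by rwa [cancel_mono q.i] at h1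
    have h2' : g.1.hom = 𝟙 X := by rwa [cancel_epi q.p] at h2
    have e2 : g.2 = 1 := by
      apply Iso.ext
      calc g.2.hom = g.2.hom ≫ g.2.inv := by rw [h1', Category.comp_id]
      _ = 𝟙 Y := g.2.hom_inv_id
    have e1 : g.1 = 1 := Iso.ext h2'
    exact Prod.ext e1 e2
  rw [this]
  simp

/-- The stabilizer of the `Aut Z`-action has the size of `Hom(X, Y)`. -/
lemma stabZ_card (q : SES Y Z X) :
    Nat.card (stabilizer (Aut Z) q) = Nat.card (X ⟶ Y) := by
  haveI := q.se.mono_f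
  haveI := q.se.epi_g
  have huu : ∀ f g : X ⟶ Y, (q.p ≫ f ≫ q.i) ≫ (q.p ≫ g ≫ q.i) = 0 := by
    intro f g
    simp [reassoc_of% q.w]
  have e1 : stabilizer (Aut Z) q ≃ {φ : Aut Z // φ • q = q} :=
    (Equiv.refl (Aut Z)).subtypeEquiv (fun φ => by
      rw [Equiv.refl_apply]; exact mem_stabilizer_iff)
  rw [Nat.card_congr e1]
  let Φ : (X ⟶ Y) → {φ : Aut Z // φ • q = q} := fun f =>
    ⟨⟨𝟙 Z + q.p ≫ f ≫ q.i, 𝟙 Z - q.p ≫ f ≫ q.i,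
        by simp [Preadditive.comp_sub, Preadditive.add_comp, huu f f],
        by simp [Preadditive.comp_add, Preadditive.sub_comp, huu f f]⟩, by
      refine SES.ext ?_ ?_
      · refine (smulZ_i _ q).trans ?_
        show q.i ≫ (𝟙 Z + q.p ≫ f ≫ q.i) = q.i
        simp [Preadditive.comp_add, reassoc_of% q.w]
      · refine (smulZ_p _ q).trans ?_
        show (𝟙 Z - q.p ≫ f ≫ q.i) ≫ q.p = q.p
        simp [Preadditive.sub_comp, q.w]⟩
  have hΦhom : ∀ f, (Φ f).1.hom = 𝟙 Z + q.p ≫ f ≫ q.i := fun f => rfl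
  have hbij : Function.Bijective Φ := by
    constructor
    · intro f g hfg
      have h0 : (Φ f).1.hom = (Φ g).1.hom := by rw [hfg]
      rw [hΦhom, hΦhom] at h0
      have h2 : q.p ≫ f ≫ q.i = q.p ≫ g ≫ q.i := add_left_cancel h0
      rw [cancel_epi q.p, cancel_mono q.i] at h2
      exact h2
    · rintro ⟨φ, hφ⟩
      have h1 : q.i ≫ φ.hom = q.i := by
        conv_rhs => rw [← hφ]
        rw [smulZ_i]
      have h2 : φ.inv ≫ q.p = q.p := by
        conv_rhs => rw [← hφ]
        rw [smulZ_p]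
      have h2' : φ.hom ≫ q.p = q.p := by
        calc φ.hom ≫ q.p = φ.hom ≫ φ.inv ≫ q.p := by rw [h2]
        _ = q.p := by rw [φ.hom_inv_id_assoc]
      have hd : (φ.hom - 𝟙 Z) ≫ q.p = 0 := by
        rw [Preadditive.sub_comp, h2', Category.id_comp, sub_self]
      obtain ⟨ψ, hψ⟩ : ∃ ψ : Z ⟶ Y, ψ ≫ q.i = φ.hom - 𝟙 Z :=
        ⟨q.exact.lift (φ.hom - 𝟙 Z) hd, q.exact.lift_f _ hd⟩
      have hiψ : q.i ≫ ψ = 0 := by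
        rw [← cancel_mono q.i, Category.assoc, hψ, zero_comp,
          Preadditive.comp_sub, h1, Category.comp_id, sub_self]
      obtain ⟨f, hf⟩ : ∃ f : X ⟶ Y, q.p ≫ f = ψ :=
        ⟨q.exact.desc ψ hiψ, q.exact.g_desc _ hiψ⟩
      refine ⟨f, ?_⟩
      apply Subtype.ext
      apply Iso.ext
      rw [hΦhom, ← Category.assoc, hf, hψ]
      abel
  exact Nat.card_congr (Equiv.ofBijective Φ hbij).symm

end SES

end SESDev

section EquivDev

open MulAction

variable {A : Type u} [Category.{v} A] [Abelian A] {Y Z X : A}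

namespace SES

lemma finiteAut (W : A) [Finite (W ⟶ W)] : Finite (Aut W) :=
  Finite.of_injective (fun f : Aut W => f.hom) (fun _ _ h => Iso.ext h)

/-- The subobject of `Z` attached to a short exact sequence. -/
noncomputable def toSub (q : SES Y Z X) :
    {S : Subobject Z // Nonempty ((S : A) ≅ Y) ∧ Nonempty (cokernel S.arrow ≅ X)} :=
  ⟨Subobject.mk q.i, ⟨Subobject.underlyingIso q.i⟩,
    ⟨(cokernelIsoOfEq (Subobject.underlyingIso_hom_comp_eq_mk q.i).symm).trans
      ((cokernelEpiComp (Subobject.underlyingIso q.i).hom q.i).trans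
        (IsColimit.coconePointUniqueUpToIso (cokernelIsCokernel q.i) q.se.gIsCokernel))⟩⟩

lemma toSub_smul (g : Aut X × Aut Y) (q : SES Y Z X) : (g • q).toSub = q.toSub := by
  apply Subtype.ext
  show Subobject.mk (g • q).i = Subobject.mk q.i
  refine Subobject.mk_eq_mk_of_comm _ _ g.2.symm ?_
  rw [smulXY_i]
  rfl

/-- Orbits of the `Aut X × Aut Y`-action are subobjects with prescribed sub and quotient. -/
noncomputable def subEquiv :
    Quotient (orbitRel (Aut X × Aut Y) (SES Y Z X)) ≃
      {S : Subobject Z // Nonempty ((S : A) ≅ Y) ∧ Nonempty (cokernel S.arrow ≅ X)} := by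
  refine Equiv.ofBijective
    (Quotient.lift toSub (fun qa qb (h : qa ∈ orbit _ qb) => ?_)) ⟨?_, ?_⟩
  · obtain ⟨g, rfl⟩ := h
    exact toSub_smul g qb
  · rintro ⟨qa⟩ ⟨qb⟩ h
    replace h : qa.toSub = qb.toSub := h
    have hmk : Subobject.mk qa.i = Subobject.mk qb.i := Subtype.ext_iff.mp h
    set b : Y ≅ Y := Subobject.isoOfMkEqMk qa.i qb.i hmk with hbdef
    have hb : b.hom ≫ qb.i = qa.i := Subobject.ofMkLEMk_comp hmk.le
    haveI := qa.se.epi_g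
    haveI := qb.se.epi_g
    have h₁ : qa.i ≫ qb.p = 0 := by
      rw [← hb, Category.assoc, qb.w, comp_zero]
    have h₂ : qb.i ≫ qa.p = 0 := by
      have hb' : b.inv ≫ qa.i = qb.i := by rw [← hb, Iso.inv_hom_id_assoc]
      rw [← hb', Category.assoc, qa.w, comp_zero]
    obtain ⟨a₁, ha₁⟩ : ∃ a₁ : X ⟶ X, qa.p ≫ a₁ = qb.p :=
      ⟨qa.exact.desc qb.p h₁, qa.exact.g_desc _ h₁⟩
    obtain ⟨a₂, ha₂⟩ : ∃ a₂ : X ⟶ X, qb.p ≫ a₂ = qa.p :=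
      ⟨qb.exact.desc qa.p h₂, qb.exact.g_desc _ h₂⟩
    have haut1 : a₁ ≫ a₂ = 𝟙 X := by
      rw [← cancel_epi qa.p, ← Category.assoc, ha₁, ha₂, Category.comp_id]
    have haut2 : a₂ ≫ a₁ = 𝟙 X := by
      rw [← cancel_epi qb.p, ← Category.assoc, ha₂, ha₁, Category.comp_id]
    set g : Aut X × Aut Y := (⟨a₁, a₂, haut1, haut2⟩, b) with hgdef
    have hg : g • qa = qb := by
      refine SES.ext ?_ ?_
      · rw [smulXY_i]
        show b.inv ≫ qa.i = qb.i
        rw [← hb, Iso.inv_hom_id_assoc]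
      · rw [smulXY_p]
        exact ha₁
    exact Quotient.sound ⟨g⁻¹, by show g⁻¹ • qb = qa; rw [← hg, inv_smul_smul]⟩
  · rintro ⟨S, ⟨u⟩, ⟨v⟩⟩
    let base0 : SES (S : A) Z (cokernel S.arrow) :=
      ⟨(S.arrow, cokernel.π S.arrow), cokernel.condition S.arrow,
        ShortComplex.ShortExact.mk'
          (ShortComplex.exact_of_g_is_cokernel _ (cokernelIsCokernel S.arrow))
          inferInstance inferInstance⟩
    refine ⟨Quotient.mk _ (base0.twist u.symm (Iso.refl Z) v), ?_⟩
    apply Subtype.ext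
    show Subobject.mk (base0.twist u.symm (Iso.refl Z) v).i = S
    refine (Subobject.mk_eq_mk_of_comm _ S.arrow u.symm ?_).trans (Subobject.mk_arrow S)
    show u.symm.hom ≫ S.arrow = (base0.twist u.symm (Iso.refl Z) v).i
    rw [twist_i]
    show u.symm.hom ≫ S.arrow = u.symm.hom ≫ S.arrow ≫ 𝟙 Z
    rw [Category.comp_id]

end SES

end EquivDev

section ExtDev

open MulAction

variable {A : Type u} [Category.{v} A] [Abelian A] {Y Z X : A}

namespace SES

lemma finiteAut' (W : A) [Finite (W ⟶ W)] : Finite (Aut W) :=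
  Finite.of_injective (fun f : Aut W => f.hom) (fun _ _ h => Iso.ext h)

/-- The extension attached to a short exact sequence with middle term `Z`. -/
def toExt (q : SES Y Z X) : {e : Extn Y X // Nonempty (e.E ≅ Z)} :=
  ⟨⟨Z, q.i, q.p, q.w, q.se⟩, ⟨Iso.refl Z⟩⟩

lemma extnEquiv_equivalence :
    Equivalence (fun e e' : {e : Extn Y X // Nonempty (e.E ≅ Z)} => ExtnEquiv e.1 e'.1) := by
  constructor
  · intro e; exact ⟨Iso.refl _, by simp, by simp⟩
  · rintro e e' ⟨φ, h1, h2⟩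
    exact ⟨φ.symm, by rw [← h1]; simp, by rw [← h2]; simp⟩
  · rintro e e' e'' ⟨φ, h1, h2⟩ ⟨ψ, h1', h2'⟩
    exact ⟨φ ≪≫ ψ, by rw [Iso.trans_hom, ← Category.assoc, h1, h1'],
      by rw [Iso.trans_hom, Category.assoc, h2', h2]⟩

/-- Orbits of the `Aut Z`-action are extension classes with middle term `Z`. -/
noncomputable def extEquiv :
    Quotient (orbitRel (Aut Z) (SES Y Z X)) ≃
      Quot (fun e e' : {e : Extn Y X // Nonempty (e.E ≅ Z)} => ExtnEquiv e.1 e'.1) := by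
  refine Equiv.ofBijective
    (Quotient.lift (fun q => Quot.mk _ q.toExt) (fun qa qb (h : qa ∈ orbit _ qb) => ?_)) ⟨?_, ?_⟩
  · obtain ⟨g, rfl⟩ := h
    refine Quot.sound ⟨g.symm, ?_, ?_⟩
    · show (g • qb).i ≫ g.inv = qb.i
      rw [smulZ_i, Category.assoc, g.hom_inv_id, Category.comp_id]
    · show g.inv ≫ qb.p = (g • qb).p
      rw [smulZ_p]
  · rintro ⟨qa⟩ ⟨qb⟩ h
    replace h : Quot.mk _ qa.toExt = Quot.mk _ qb.toExt := h
    obtain ⟨φ, h1, h2⟩ := (extnEquiv_equivalence.eqvGen_iff).mp (Quot.eq.mp h)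
    let g : Aut Z := φ
    have h1' : qa.i ≫ g.hom = qb.i := h1
    have h2' : g.hom ≫ qb.p = qa.p := h2
    have hg : g • qa = qb := by
      refine SES.ext ?_ ?_
      · rw [smulZ_i]; exact h1'
      · rw [smulZ_p, ← h2']; exact Iso.inv_hom_id_assoc _ _
    exact Quotient.sound ⟨g⁻¹, by show g⁻¹ • qb = qa; rw [← hg, inv_smul_smul]⟩
  · refine Quot.ind ?_
    rintro ⟨e, he⟩
    obtain ⟨ψ⟩ := he
    let base0 : SES Y e.E X := ⟨(e.ι, e.π), e.w, e.shortExact⟩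
    refine ⟨Quotient.mk _ (base0.twist (Iso.refl Y) ψ (Iso.refl X)), ?_⟩
    refine Quot.sound ⟨ψ.symm, ?_, ?_⟩
    · show (base0.twist (Iso.refl Y) ψ (Iso.refl X)).i ≫ ψ.inv = e.ι
      rw [twist_i]
      show (𝟙 Y ≫ e.ι ≫ ψ.hom) ≫ ψ.inv = e.ι
      simp
    · show ψ.inv ≫ e.π = (base0.twist (Iso.refl Y) ψ (Iso.refl X)).p
      rw [twist_p]
      show ψ.inv ≫ e.π = ψ.inv ≫ e.π ≫ 𝟙 X
      rw [Category.comp_id]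

end SES

end ExtDev

theorem stmt15 (k : Type) [Field k] [Finite k] [CategoryTheory.Linear k A]
    [∀ X Y : A, Finite (X ⟶ Y)]
    (hfinext : ∀ X Y : A, Finite (Quot (ExtnEquiv (M := Y) (L := X))))
    [HasExt.{w} A]
    (hered : ∀ (X Y : A) (n : ℕ), 2 ≤ n → Subsingleton (Abelian.Ext X Y n))
    (X Y Z : A) :
    (hallNum Z X Y : ℚ) =
      ((extCardWith X Y Z : ℚ) / (homCard X Y : ℚ)) *
        ((autCard Z : ℚ) / ((autCard X : ℚ) * (autCard Y : ℚ))) := by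
  classical
  haveI : Finite (Aut X) := SES.finiteAut' X
  haveI : Finite (Aut Y) := SES.finiteAut' Y
  haveI : Finite (Aut Z) := SES.finiteAut' Z
  have h1 := orbit_count (G := Aut X × Aut Y) (S := SES Y Z X) 1 SES.stabXY_card
  have h2 := orbit_count (G := Aut Z) (S := SES Y Z X) (Nat.card (X ⟶ Y)) SES.stabZ_card
  rw [Nat.card_congr (SES.subEquiv (Y := Y) (Z := Z) (X := X)), mul_one, Nat.card_prod] at h1
  rw [Nat.card_congr (SES.extEquiv (Y := Y) (Z := Z) (X := X))] at h2
  have e1 : Nat.card (SES Y Z X) = hallNum Z X Y * (autCard X * autCard Y) := h1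
  have e2 : Nat.card (SES Y Z X) * homCard X Y = extCardWith X Y Z * autCard Z := h2
  have e3 : hallNum Z X Y * (autCard X * autCard Y) * homCard X Y =
      extCardWith X Y Z * autCard Z := by rw [← e1]; exact e2
  have key : (hallNum Z X Y : ℚ) * ((autCard X : ℚ) * (autCard Y : ℚ)) * (homCard X Y : ℚ) =
      (extCardWith X Y Z : ℚ) * (autCard Z : ℚ) := by exact_mod_cast e3
  haveI : Nonempty (X ⟶ Y) := ⟨0⟩
  have hx : 0 < (autCard X : ℚ) := by exact_mod_cast Nat.card_pos (α := Aut X)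
  have hy : 0 < (autCard Y : ℚ) := by exact_mod_cast Nat.card_pos (α := Aut Y)
  have hh : 0 < (homCard X Y : ℚ) := by exact_mod_cast Nat.card_pos (α := (X ⟶ Y))
  rw [div_mul_div_comm, eq_div_iff (by positivity)]
  linear_combination key
end
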